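/- arXiv:1010.4988 — 6 statements merged into one kernel-verified Lean document; each statement's English description precedes it below -/
import Mathlib

section
/- Any absolutely continuous and nondecreasing viscosity supersolution ū of L*(u)=0 on (0,∞) is semiconcave on every interval [x₀,x₁] ⊂ (0,∞), i.e., for each such interval there exists K ∈ ℝ such that x ↦ ū(x) − Kx²/2 is concave on [x₀,x₁]. -/
open MeasureTheory Set Filter
open Topology
set_option maxHeartbeats 1000000

/-- The operator `L_γ(u,f)(x)` from the paper: second-order integro-differential
operator with drift/volatility controlled by `γ`, integral term with respect to the
Lebesgue–Stieltjes measure of the claim-size distribution `F`. -/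
noncomputable def Lg (p β c r σ : ℝ) (F : StieltjesFunction ℝ)
    (γ : ℝ) (u f : ℝ → ℝ) (x : ℝ) : ℝ :=
  σ ^ 2 * γ ^ 2 * x ^ 2 * deriv (deriv f) x / 2 + (p + r * γ * x) * deriv f x
    - (c + β) * u x + β * ∫ α in Icc (0 : ℝ) x, u (x - α) ∂F.measure

/-- `L*(u,f)(x) = sup_{γ ∈ [0,1]} L_γ(u,f)(x)`. -/
noncomputable def Lstar (p β c r σ : ℝ) (F : StieltjesFunction ℝ)
    (u f : ℝ → ℝ) (x : ℝ) : ℝ :=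
  ⨆ γ : Icc (0 : ℝ) 1, Lg p β c r σ F (γ : ℝ) u f x

/-- `u` is a viscosity supersolution of `L*(u) = 0` at `x ∈ (0,∞)`: every `C²` test
function `φ` such that `u - φ` attains its minimum over `(0,∞)` at `x` satisfies
`sup_γ L_γ(u,φ)(x) ≤ 0`. -/
def SupersolLAt (p β c r σ : ℝ) (F : StieltjesFunction ℝ) (u : ℝ → ℝ) (x : ℝ) : Prop :=
  ∀ φ : ℝ → ℝ, ContDiff ℝ 2 φ → (∀ y ∈ Ioi (0 : ℝ), u x - φ x ≤ u y - φ y) →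
    Lstar p β c r σ F u φ x ≤ 0

-- derivative computations for the test function
lemma phi_hasDerivAt (ws sl ε K C s t xs y : ℝ) :
    HasDerivAt (fun y : ℝ => ws + sl*(y-s) + ε*((y-s)*(y-t)) + K*y^2/2 - C*(y-xs)^4)
      (sl + ε*((y-s)+(y-t)) + K*y - C*(4*(y-xs)^3)) y := by
  have h1 : HasDerivAt (fun y : ℝ => y - s) 1 y := (hasDerivAt_id y).sub_const s
  have h1' : HasDerivAt (fun y : ℝ => y - t) 1 y := (hasDerivAt_id y).sub_const t
  have h1x : HasDerivAt (fun y : ℝ => y - xs) 1 y := (hasDerivAt_id y).sub_const xs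
  have h2 := h1.const_mul sl
  have h3 := (h1.mul h1').const_mul ε
  have h5 : HasDerivAt (fun y : ℝ => y^2) (2*y) y := by simpa using hasDerivAt_pow 2 y
  have h6 := (h5.const_mul K).div_const 2
  have h7 := (h1x.pow 4).const_mul C
  have := ((((hasDerivAt_const y ws).add h2).add h3).add h6).sub h7
  refine this.congr_deriv ?_
  push_cast
  ring

lemma phi'_hasDerivAt (sl ε K C s t xs y : ℝ) :
    HasDerivAt (fun y : ℝ => sl + ε*((y-s)+(y-t)) + K*y - C*(4*(y-xs)^3))
      (2*ε + K - C*(12*(y-xs)^2)) y := by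
  have h1 : HasDerivAt (fun y : ℝ => y - s) 1 y := (hasDerivAt_id y).sub_const s
  have h1' : HasDerivAt (fun y : ℝ => y - t) 1 y := (hasDerivAt_id y).sub_const t
  have h1x : HasDerivAt (fun y : ℝ => y - xs) 1 y := (hasDerivAt_id y).sub_const xs
  have h3 := (h1.add h1').const_mul ε
  have h6 := (hasDerivAt_id y).const_mul K
  have h7 := ((h1x.pow 3).const_mul 4).const_mul C
  have := (((hasDerivAt_const y sl).add h3).add h6).sub h7
  refine this.congr_deriv ?_
  push_cast
  ring

lemma quartic_dom (A d z B₀ B₁ B₂ : ℝ) (hd : 0 < d) (hz : d^2 ≤ z^2)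
    (hA : |B₀| + |B₁| + |B₂| ≤ A) :
    B₀ + B₁*z + B₂*z^2 ≤ A*(1/d^4 + 1/d^2)*z^4 := by
  have hA' : (0:ℝ) ≤ A := le_trans (by positivity) hA
  have h0 : B₀ ≤ |B₀| := le_abs_self _
  have h1 : B₁*z ≤ |B₁| * (1+z^2) := by
    have := le_abs_self (B₁*z)
    rw [abs_mul] at this
    nlinarith [abs_nonneg B₁, sq_nonneg (|z|-1), sq_abs z, abs_nonneg z]
  have h2 : B₂*z^2 ≤ |B₂| * z^2 := mul_le_mul_of_nonneg_right (le_abs_self _) (sq_nonneg z)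
  have hz4 : d^4 ≤ z^4 := by nlinarith [sq_nonneg z, sq_nonneg d]
  have hz2' : d^2*z^2 ≤ z^4 := by nlinarith [sq_nonneg z]
  have e1 : A ≤ A*z^4/d^4 := by
    rw [le_div_iff₀ (by positivity)]
    nlinarith
  have e2 : A*z^2 ≤ A*z^4/d^2 := by
    rw [le_div_iff₀ (by positivity)]
    nlinarith
  have key : |B₀| + |B₁| * (1+z^2) + |B₂| * z^2 ≤ A + A*z^2 := by
    nlinarith [sq_nonneg z, abs_nonneg B₀, abs_nonneg B₁, abs_nonneg B₂]
  have : A*(1/d^4 + 1/d^2)*z^4 = A*z^4/d^4 + A*z^4/d^2 := by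
    field_simp
  linarith

lemma aux_prod (a b : ℝ) (ha : 0 ≤ a) (hb : 0 ≤ b) : a*b ≤ (a+b)^2 := by
  nlinarith [sq_nonneg a, sq_nonneg b]

lemma aux_absmul (v f : ℝ) (h0 : 0 ≤ f) (h1 : f ≤ 1) : -|v| ≤ f * v := by
  nlinarith [le_abs_self v, neg_abs_le v, abs_nonneg v]

lemma aux_ellip (σ x₀ xs ε K : ℝ) (hσ : 0 < σ) (hx₀ : 0 < x₀) (hx2 : x₀^2 ≤ xs^2)
    (hε : 0 < ε) (hK : 0 < K) : σ^2*x₀^2*K/2 ≤ σ^2*xs^2*(2*ε+K)/2 := by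
  have hσ2 : 0 < σ^2 := by positivity
  have hx02 : 0 < x₀^2 := by positivity
  nlinarith [mul_pos hσ2 (mul_pos hε hx02), mul_le_mul_of_nonneg_left hx2 (mul_pos hσ2 hK).le]

lemma semiconcave_main
    (p β c r σ : ℝ) (hp : 0 < p) (hβ : 0 < β) (hr : 0 < r) (hc : 0 < c) (hσ : 0 < σ)
    (F : StieltjesFunction ℝ)
    (hF01 : ∀ x : ℝ, F x ∈ Icc (0:ℝ) 1)
    (hF0 : ∀ x : ℝ, x ≤ 0 → F x = 0)
    (u : ℝ → ℝ)
    (hu_cont : ContinuousOn u (Ici 0))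
    (hmono : MonotoneOn u (Ici 0))
    (hsuper : ∀ x ∈ Ioi (0:ℝ), SupersolLAt p β c r σ F u x)
    (x₀ x₁ : ℝ) (hx₀ : 0 < x₀) (K : ℝ) (hKpos : 0 < K)
    (hK : (c+β) * |u x₁| + β * |u 0| + 1 ≤ σ^2 * x₀^2 * K / 2)
    (s t : ℝ) (hs : x₀ ≤ s) (ht : t ≤ x₁) (hst : s < t)
    (z : ℝ) (hzs : s < z) (hzt : z < t)
    (hchord : u z - K*z^2/2 <
      (u s - K*s^2/2) + ((u t - K*t^2/2) - (u s - K*s^2/2)) * (z - s) / (t - s)) :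
    False := by
  have hspos : 0 < s := lt_of_lt_of_le hx₀ hs
  have hts : 0 < t - s := by linarith only [hst]
  have htsne : t - s ≠ 0 := ne_of_gt hts
  obtain ⟨ws, hws⟩ : ∃ ws : ℝ, ws = u s - K*s^2/2 := ⟨_, rfl⟩
  obtain ⟨sl, hsl⟩ : ∃ sl : ℝ, sl = ((u t - K*t^2/2) - ws) / (t - s) := ⟨_, rfl⟩
  have hslts : sl*(t-s) = (u t - K*t^2/2) - ws := by rw [hsl]; field_simp
  obtain ⟨δ, hδ⟩ : ∃ δ : ℝ, δ = ws + sl*(z - s) - (u z - K*z^2/2) := ⟨_, rfl⟩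
  have hδpos : 0 < δ := by
    have h1 : ((u t - K*t^2/2) - ws) * (z - s) / (t - s) = sl * (z-s) := by
      rw [hsl]; ring
    rw [hδ]; rw [show u s - K*s^2/2 = ws from hws.symm, h1] at hchord; linarith only [hchord]
  obtain ⟨ε, hε⟩ : ∃ ε : ℝ, ε = δ / (2*(t-s)^2) := ⟨_, rfl⟩
  have hεpos : 0 < ε := by rw [hε]; positivity
  have hεts : ε*(t-s)^2 = δ/2 := by rw [hε]; field_simp
  -- the C² part of the test function (without quartic correction)
  obtain ⟨φ, hφ⟩ : ∃ φ : ℝ → ℝ, φ = fun y => ws + sl*(y-s) + ε*((y-s)*(y-t)) + K*y^2/2 :=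
    ⟨_, rfl⟩
  obtain ⟨ψ, hψ⟩ : ∃ ψ : ℝ → ℝ, ψ = fun y => u y - φ y := ⟨_, rfl⟩
  have hψs : ψ s = 0 := by simp only [hψ, hφ, hws]; ring
  have hψt : ψ t = 0 := by
    simp only [hψ, hφ]
    linear_combination -1 * hslts
  have hψz : ψ z < 0 := by
    have h1 : (z-s)*(t-z) ≤ (t-s)^2 := by
      have h0 := aux_prod (z-s) (t-z) (by linarith only [hzs]) (by linarith only [hzt])
      calc (z-s)*(t-z) ≤ ((z-s)+(t-z))^2 := h0
        _ = (t-s)^2 := by ring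
    have h2 : ε*((z-s)*(t-z)) ≤ ε*(t-s)^2 :=
      mul_le_mul_of_nonneg_left h1 hεpos.le
    simp only [hψ, hφ]
    have hδz : ws + sl*(z-s) - (u z - K*z^2/2) = δ := hδ.symm
    linarith only [h2, hεts, hδpos, hδz]
  -- minimize ψ on [s,t]
  have hψcont : ContinuousOn ψ (Icc s t) := by
    simp only [hψ, hφ]
    apply ContinuousOn.sub
    · exact hu_cont.mono (fun y hy => le_trans hspos.le hy.1)
    · fun_prop
  obtain ⟨xs, hxsmem, hxsmin⟩ := isCompact_Icc.exists_isMinOn (nonempty_Icc.2 hst.le) hψcont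
  have hmin : ∀ y ∈ Icc s t, ψ xs ≤ ψ y := fun y hy => isMinOn_iff.mp hxsmin y hy
  have hψxs : ψ xs < 0 := lt_of_le_of_lt (hmin z ⟨hzs.le, hzt.le⟩) hψz
  have hxss : s < xs := by
    rcases eq_or_lt_of_le hxsmem.1 with h | h
    · exfalso; rw [← h] at hψxs; linarith only [hψs, hψxs]
    · exact h
  have hxst : xs < t := by
    rcases eq_or_lt_of_le hxsmem.2 with h | h
    · exfalso; rw [h] at hψxs; linarith only [hψt, hψxs]
    · exact h
  have hxspos : 0 < xs := lt_trans hspos hxss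
  -- distance to the endpoints
  obtain ⟨d, hd⟩ : ∃ d : ℝ, d = min (xs - s) (t - xs) := ⟨_, rfl⟩
  have hdpos : 0 < d := by rw [hd]; exact lt_min (by linarith only [hxss]) (by linarith only [hxst])
  have hds : d ≤ xs - s := hd ▸ min_le_left _ _
  have hdt : d ≤ t - xs := hd ▸ min_le_right _ _
  -- Taylor coefficients of φ at xs
  obtain ⟨B₀, hB₀⟩ : ∃ B : ℝ, B = u xs - u 0 := ⟨_, rfl⟩
  obtain ⟨B₁, hB₁⟩ : ∃ B : ℝ, B = sl + ε*((xs-s)+(xs-t)) + K*xs := ⟨_, rfl⟩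
  obtain ⟨B₂, hB₂⟩ : ∃ B : ℝ, B = ε + K/2 := ⟨_, rfl⟩
  obtain ⟨A, hA⟩ : ∃ A : ℝ, A = |B₀| + |B₁| + |B₂| := ⟨_, rfl⟩
  have hAnn : 0 ≤ A := by rw [hA]; positivity
  obtain ⟨C, hC⟩ : ∃ C : ℝ, C = A*(1/d^4 + 1/d^2) := ⟨_, rfl⟩
  have hCnn : 0 ≤ C := by rw [hC]; positivity
  -- the test function
  obtain ⟨φt, hφtdef⟩ : ∃ φt : ℝ → ℝ,
      φt = fun y => ws + sl*(y-s) + ε*((y-s)*(y-t)) + K*y^2/2 - C*(y-xs)^4 := ⟨_, rfl⟩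
  have hφteq : ∀ y, φt y = φ y - C*(y-xs)^4 := by
    intro y; rw [hφtdef, hφ]
  have hD1 : ∀ y, HasDerivAt φt (sl + ε*((y-s)+(y-t)) + K*y - C*(4*(y-xs)^3)) y := by
    intro y; rw [hφtdef]; exact phi_hasDerivAt ws sl ε K C s t xs y
  have hderiv1 : deriv φt = fun y => sl + ε*((y-s)+(y-t)) + K*y - C*(4*(y-xs)^3) :=
    funext fun y => (hD1 y).deriv
  have hd1xs : deriv φt xs = B₁ := by rw [hderiv1, hB₁]; ring
  have hd2xs : deriv (deriv φt) xs = 2*ε + K := by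
    rw [hderiv1, (phi'_hasDerivAt sl ε K C s t xs xs).deriv]; ring
  have hC2 : ContDiff ℝ 2 φt := by
    rw [hφtdef]
    have heq : (fun y : ℝ => ws + sl*(y-s) + ε*((y-s)*(y-t)) + K*y^2/2 - C*(y-xs)^4)
        = fun y : ℝ => ws + sl*(y-s) + ε*((y-s)*(y-t)) + (K/2)*y^2 - C*(y-xs)^4 := by
      funext y; ring
    rw [heq]; fun_prop
  -- global minimality of u - φt at xs
  have hgm : ∀ y ∈ Ioi (0:ℝ), u xs - φt xs ≤ u y - φt y := by
    intro y hy
    rw [mem_Ioi] at hy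
    by_cases hyIcc : y ∈ Icc s t
    · have h1 := hmin y hyIcc
      simp only [hψ] at h1
      have h2 : 0 ≤ C*(y-xs)^4 := by positivity
      rw [hφteq y, hφteq xs]
      have h3 : (xs - xs)^4 = 0 := by ring
      rw [h3]
      linarith only [h1, h2]
    · have hz2 : d^2 ≤ (y - xs)^2 := by
        rcases lt_or_ge y s with h | h
        · have h1 : d ≤ xs - y := by linarith only [h, hds]
          have h2 := pow_le_pow_left₀ hdpos.le h1 2
          calc d^2 ≤ (xs - y)^2 := h2
            _ = (y - xs)^2 := by ring
        · have h' : t < y := by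
            rcases lt_or_ge t y with h' | h'
            · exact h'
            · exact absurd ⟨h, h'⟩ hyIcc
          have h1 : d ≤ y - xs := by linarith only [h', hdt]
          exact pow_le_pow_left₀ hdpos.le h1 2
      have hq := quartic_dom A d (y - xs) B₀ B₁ B₂ hdpos hz2 (le_of_eq hA.symm)
      have hCq : B₀ + B₁*(y-xs) + B₂*(y-xs)^2 ≤ C*(y-xs)^4 := by rw [hC]; exact hq
      rw [hB₀] at hCq
      have hu0y : u 0 ≤ u y := hmono self_mem_Ici (le_of_lt hy) (le_of_lt hy)
      have hexp : φ y = φ xs + B₁*(y-xs) + B₂*(y-xs)^2 := by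
        rw [hφ, hB₁, hB₂]; ring
      rw [hφteq y, hφteq xs]
      have h3 : (xs - xs)^4 = 0 := by ring
      rw [h3]
      linarith only [hCq, hu0y, hexp]
  -- the slope of φt at xs is nonnegative
  have hB₁d : HasDerivAt φt B₁ xs := by
    have := hD1 xs
    rw [show sl + ε*((xs-s)+(xs-t)) + K*xs - C*(4*(xs-xs)^3) = B₁ by rw [hB₁]; ring] at this
    exact this
  have hB₁nn : 0 ≤ B₁ := by
    have hslope : Tendsto (slope φt xs) (𝓝[<] xs) (𝓝 B₁) :=
      (hasDerivAt_iff_tendsto_slope.mp hB₁d).mono_left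
        (nhdsWithin_mono _ (fun y hy => ne_of_lt hy))
    refine ge_of_tendsto hslope ?_
    filter_upwards [Ioo_mem_nhdsLT_of_mem (⟨hxspos, le_rfl⟩ : xs ∈ Ioc 0 xs)] with y hy
    have huy : u y ≤ u xs := hmono (le_of_lt hy.1) hxspos.le hy.2.le
    have hφty : φt y ≤ φt xs := by
      have := hgm y (mem_Ioi.mpr hy.1)
      linarith only [this, huy]
    have hyx : y - xs < 0 := by linarith only [hy.2]
    rw [slope_def_field]
    have := div_nonneg (neg_nonneg.2 (sub_nonpos.2 hφty)) (neg_nonneg.2 hyx.le)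
    rwa [neg_div_neg_eq] at this
  -- lower bound on the integral term
  have hIcc0 : Function.leftLim (⇑F) 0 = 0 := by
    have h1 : Function.leftLim (⇑F) 0 ≤ F 0 := F.mono.leftLim_le le_rfl
    have h2 : F (-1) ≤ Function.leftLim (⇑F) 0 := F.mono.le_leftLim (by norm_num)
    rw [hF0 0 le_rfl] at h1
    rw [hF0 (-1) (by norm_num)] at h2
    linarith only [h1, h2]
  have hμ : F.measure (Icc 0 xs) = ENNReal.ofReal (F xs) := by
    rw [F.measure_Icc, hIcc0, sub_zero]
  have hμfin : F.measure (Icc 0 xs) < ⊤ := by rw [hμ]; exact ENNReal.ofReal_lt_top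
  have htoReal : (F.measure (Icc 0 xs)).toReal = F xs :=
    by rw [hμ, ENNReal.toReal_ofReal (hF01 xs).1]
  have hcont2 : ContinuousOn (fun α => u (xs - α)) (Icc 0 xs) := by
    apply hu_cont.comp (f := fun α : ℝ => xs - α) (by fun_prop)
    intro α hα
    rw [mem_Icc] at hα
    show xs - α ∈ Ici (0:ℝ)
    rw [mem_Ici]
    linarith only [hα.2]
  have hInt : IntegrableOn (fun α => u (xs - α)) (Icc 0 xs) F.measure :=
    hcont2.integrableOn_compact isCompact_Icc
  have hIlow : -|u 0| ≤ ∫ α in Icc (0:ℝ) xs, u (xs - α) ∂F.measure := by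
    have hconst : IntegrableOn (fun _ : ℝ => u 0) (Icc 0 xs) F.measure :=
      integrableOn_const hμfin.ne
    have hmono2 : ∀ α ∈ Icc (0:ℝ) xs, u 0 ≤ u (xs - α) := by
      intro α hα
      rw [mem_Icc] at hα
      exact hmono self_mem_Ici (by rw [mem_Ici]; linarith only [hα.2]) (by linarith only [hα.2])
    have h1 := setIntegral_mono_on hconst hInt measurableSet_Icc hmono2
    rw [setIntegral_const, measureReal_def, htoReal, smul_eq_mul] at h1
    have h2 : -|u 0| ≤ F xs * u 0 := aux_absmul (u 0) (F xs) (hF01 xs).1 (hF01 xs).2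
    linarith only [h1, h2]
  -- apply the supersolution property with test function φt
  have hLs : Lstar p β c r σ F u φt xs ≤ 0 :=
    hsuper xs (mem_Ioi.mpr hxspos) φt hC2 hgm
  have hbdd : BddAbove (range fun γ : Icc (0:ℝ) 1 => Lg p β c r σ F (γ : ℝ) u φt xs) := by
    have himg : (range fun γ : Icc (0:ℝ) 1 => Lg p β c r σ F (γ : ℝ) u φt xs)
        = (fun γ : ℝ => Lg p β c r σ F γ u φt xs) '' (Icc 0 1) := by
      rw [image_eq_range]
    rw [himg]
    apply IsCompact.bddAbove_image isCompact_Icc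
    have : ContinuousOn (fun γ : ℝ => Lg p β c r σ F γ u φt xs) (Icc 0 1) := by
      simp only [Lg]
      fun_prop
    exact this
  have hL1 : Lg p β c r σ F ((⟨1, by norm_num⟩ : Icc (0:ℝ) 1) : ℝ) u φt xs ≤
      Lstar p β c r σ F u φt xs :=
    le_ciSup hbdd ⟨1, by norm_num⟩
  have hL1' : Lg p β c r σ F 1 u φt xs ≤ 0 := le_trans hL1 hLs
  rw [Lg, hd1xs, hd2xs] at hL1'
  -- final contradiction
  have hux : u xs ≤ |u x₁| := by
    have h1 : u xs ≤ u x₁ := hmono hxspos.le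
      (by rw [mem_Ici]; linarith only [hx₀, hs, hst, ht]) (by linarith only [hxst, ht])
    exact le_trans h1 (le_abs_self _)
  have hx0xs : x₀ ≤ xs := by linarith only [hs, hxss]
  have he1 : σ^2 * x₀^2 * K / 2 ≤ σ^2 * xs^2 * (2*ε + K) / 2 :=
    aux_ellip σ x₀ xs ε K hσ hx₀ (pow_le_pow_left₀ hx₀.le hx0xs 2) hεpos hKpos
  have he2 : 0 ≤ (p + r * 1 * xs) * B₁ :=
    mul_nonneg (by have h := mul_pos hr hxspos; linarith only [hp, h]) hB₁nn
  have he3 : (c + β) * u xs ≤ (c + β) * |u x₁| :=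
    mul_le_mul_of_nonneg_left hux (by linarith only [hc, hβ])
  have he4 : -(β * |u 0|) ≤ β * (∫ α in Icc (0:ℝ) xs, u (xs - α) ∂F.measure) := by
    have h := mul_le_mul_of_nonneg_left hIlow hβ.le
    linarith only [h]
  have hmain : σ^2 * 1^2 * xs^2 * (2*ε + K) / 2 = σ^2 * xs^2 * (2*ε + K) / 2 := by ring
  rw [hmain] at hL1'
  linarith only [hL1', he1, he2, he3, he4, hK]


/-- **Semiconcavity of supersolutions** (Proposition 3.1): any absolutely continuous and
nondecreasing viscosity supersolution of `L*(u) = 0` on `(0,∞)` is semiconcave on every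
interval `[x₀,x₁] ⊂ (0,∞)`: there exists `K` such that `x ↦ u x - K x² / 2` is concave
on `[x₀,x₁]`. Absolute continuity is expressed by `u` being the indefinite integral of a
locally integrable function on `[0,∞)`. -/
theorem supersolution_semiconcave
    (p β c r σ : ℝ) (hp : 0 < p) (hβ : 0 < β) (hr : 0 < r) (hrc : r < c) (hσ : 0 < σ)
    (F : StieltjesFunction ℝ)
    (hF01 : ∀ x : ℝ, F x ∈ Icc (0 : ℝ) 1)
    (hF0 : ∀ x : ℝ, x ≤ 0 → F x = 0)
    (hF1 : Tendsto (⇑F) atTop (nhds 1))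
    (hFmean : IntegrableOn id (Ici (0 : ℝ)) F.measure)
    (u : ℝ → ℝ)
    (hAC : ∃ g : ℝ → ℝ, LocallyIntegrableOn g (Ici 0) volume ∧
      ∀ x ∈ Ici (0 : ℝ), u x = u 0 + ∫ t in (0 : ℝ)..x, g t)
    (hmono : MonotoneOn u (Ici 0))
    (hsuper : ∀ x ∈ Ioi (0 : ℝ), SupersolLAt p β c r σ F u x) :
    ∀ x₀ x₁ : ℝ, 0 < x₀ → x₀ ≤ x₁ →
      ∃ K : ℝ, ConcaveOn ℝ (Icc x₀ x₁) (fun x => u x - K * x ^ 2 / 2) := by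
  have hc : 0 < c := lt_trans hr hrc
  -- u is continuous on [0,∞) by absolute continuity
  have hu_cont : ContinuousOn u (Ici 0) := by
    obtain ⟨g, hg, hrep⟩ := hAC
    have hmaincont : ContinuousOn (fun x => u 0 + ∫ t in (0:ℝ)..x, g t) (Ici 0) := by
      intro x hx
      rw [mem_Ici] at hx
      have hmem : Icc (0:ℝ) (x+1) ∈ 𝓝[Ici 0] x :=
        mem_nhdsWithin.mpr ⟨Iio (x+1), isOpen_Iio, lt_add_one x,
          fun y hy => ⟨hy.2, le_of_lt hy.1⟩⟩
      have hint : IntegrableOn g (Icc 0 (x+1)) volume :=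
        hg.integrableOn_compact_subset (fun y hy => hy.1) isCompact_Icc
      have hco : ContinuousOn (fun y => ∫ t in (0:ℝ)..y, g t) (Icc 0 (x+1)) := by
        have h1 := intervalIntegral.continuousOn_primitive (f := g) (a := 0) (b := x+1) hint
        apply h1.congr
        intro y hy
        exact intervalIntegral.integral_of_le hy.1
      have hcw : ContinuousWithinAt (fun y => u 0 + ∫ t in (0:ℝ)..y, g t)
          (Icc 0 (x+1)) x :=
        (continuousOn_const.add hco) x ⟨hx, le_of_lt (lt_add_one x)⟩
      exact hcw.mono_of_mem_nhdsWithin hmem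
    exact hmaincont.congr hrep
  intro x₀ x₁ hx₀ hx01
  obtain ⟨K, hKdef⟩ : ∃ K : ℝ, K = (2*((c+β) * |u x₁| + β * |u 0|) + 2)/(σ^2 * x₀^2) :=
    ⟨_, rfl⟩
  have hKpos : 0 < K := by
    rw [hKdef]
    have h1 : 0 ≤ |u x₁| := abs_nonneg _
    have h2 : 0 ≤ |u 0| := abs_nonneg _
    positivity
  have hK : (c+β) * |u x₁| + β * |u 0| + 1 ≤ σ^2 * x₀^2 * K / 2 := by
    rw [hKdef]
    rw [show σ^2 * x₀^2 * ((2*((c+β) * |u x₁| + β * |u 0|) + 2)/(σ^2 * x₀^2)) / 2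
        = (c+β) * |u x₁| + β * |u 0| + 1 by field_simp]
  refine ⟨K, ?_⟩
  by_contra hcon
  rw [ConcaveOn] at hcon
  push_neg at hcon
  obtain ⟨X, hX, Y, hY, a, b, ha, hb, hab, hlt⟩ := hcon (convex_Icc x₀ x₁)
  simp only [smul_eq_mul] at hlt
  have ha1 : a = 1 - b := by linarith only [hab]
  rcases lt_trichotomy X Y with hXY | hXY | hXY
  · -- X < Y
    rcases eq_or_lt_of_le ha with ha0 | ha0
    · rw [← ha0] at hlt hab
      rw [show b = 1 by linarith] at hlt
      simp at hlt
    rcases eq_or_lt_of_le hb with hb0 | hb0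
    · rw [← hb0] at hlt hab
      rw [show a = 1 by linarith] at hlt
      simp at hlt
    have hzX : a*X+b*Y - X = b*(Y-X) := by linear_combination X * hab
    have hzY : Y - (a*X+b*Y) = a*(Y-X) := by linear_combination (-Y) * hab
    have hzs : X < a*X+b*Y := by
      have h := mul_pos hb0 (sub_pos.2 hXY); linarith only [h, hzX]
    have hzt : a*X+b*Y < Y := by
      have h := mul_pos ha0 (sub_pos.2 hXY); linarith only [h, hzY]
    have hYX : Y - X ≠ 0 := by intro h; linarith [sub_eq_zero.mp h]
    have hchord : u (a*X+b*Y) - K*(a*X+b*Y)^2/2 <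
        (u X - K*X^2/2) + ((u Y - K*Y^2/2) - (u X - K*X^2/2)) * ((a*X+b*Y) - X) / (Y - X) := by
      have hr1 : ((u Y - K*Y^2/2) - (u X - K*X^2/2)) * ((a*X+b*Y) - X) / (Y - X)
          = ((u Y - K*Y^2/2) - (u X - K*X^2/2)) * b := by
        rw [hzX]; field_simp
      rw [hr1]
      have hx : a*(u X - K*X^2/2) = (u X - K*X^2/2) - b*(u X - K*X^2/2) := by
        rw [ha1]; ring
      linarith only [hlt, hx]
    exact semiconcave_main p β c r σ hp hβ hr hc hσ F hF01 hF0 u hu_cont hmono hsuper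
      x₀ x₁ hx₀ K hKpos hK X Y hX.1 hY.2 hXY (a*X+b*Y) hzs hzt hchord
  · -- X = Y
    rw [hXY] at hlt
    rw [show a*Y+b*Y = Y by linear_combination Y * hab] at hlt
    have hx : a*(u Y - K*Y^2/2) + b*(u Y - K*Y^2/2) = u Y - K*Y^2/2 := by
      linear_combination (u Y - K*Y^2/2) * hab
    linarith only [hlt, hx]
  · -- Y < X
    rcases eq_or_lt_of_le ha with ha0 | ha0
    · rw [← ha0] at hlt hab
      rw [show b = 1 by linarith] at hlt
      simp at hlt
    rcases eq_or_lt_of_le hb with hb0 | hb0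
    · rw [← hb0] at hlt hab
      rw [show a = 1 by linarith] at hlt
      simp at hlt
    have hzY : a*X+b*Y - Y = a*(X-Y) := by linear_combination Y * hab
    have hzX2 : X - (a*X+b*Y) = b*(X-Y) := by linear_combination (-X) * hab
    have hzs : Y < a*X+b*Y := by
      have h := mul_pos ha0 (sub_pos.2 hXY); linarith only [h, hzY]
    have hzt : a*X+b*Y < X := by
      have h := mul_pos hb0 (sub_pos.2 hXY); linarith only [h, hzX2]
    have hXYne : X - Y ≠ 0 := by intro h; linarith [sub_eq_zero.mp h]
    have hchord : u (a*X+b*Y) - K*(a*X+b*Y)^2/2 <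
        (u Y - K*Y^2/2) + ((u X - K*X^2/2) - (u Y - K*Y^2/2)) * ((a*X+b*Y) - Y) / (X - Y) := by
      have hr1 : ((u X - K*X^2/2) - (u Y - K*Y^2/2)) * ((a*X+b*Y) - Y) / (X - Y)
          = ((u X - K*X^2/2) - (u Y - K*Y^2/2)) * a := by
        rw [hzY]; field_simp
      rw [hr1]
      have hx : b*(u Y - K*Y^2/2) = (u Y - K*Y^2/2) - a*(u Y - K*Y^2/2) := by
        rw [show b = 1 - a by linarith only [hab]]; ring
      linarith only [hlt, hx]
    exact semiconcave_main p β c r σ hp hβ hr hc hσ F hF01 hF0 u hu_cont hmono hsuper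
      x₀ x₁ hx₀ K hKpos hK Y X hY.1 hX.2 hXY (a*X+b*Y) hzs hzt hchord
end

section
/- Second-derivative bound for inf-convolutions of supersolutions: let ū be a nonnegative, nondecreasing, absolutely continuous viscosity supersolution of L*(u)=0 on (0,∞) which is k₀-Lipschitz on [0,x₁] with k₀ ≥ 1, let 0 < x₀ < x₁, and define v_n(x) = inf_{y∈[0,x₁]} ( ū(y) + n²(x−y)²/2 ). Then for every n with n² ≥ 4k₀/x₀ and every x̄ ∈ [x₀,x₁] at which v_n is twice differentiable, v_n''(x̄) ≤ 8(c+β)ū(x₁)/(σ²x₀²). -/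
open MeasureTheory Set Filter
open scoped Topology

/-- One-sided second-order comparison for convex functions with a.e. derivative bound. -/
lemma infconv_core {W : ℝ → ℝ} {a b D Q : ℝ}
    (hW : ConvexOn ℝ univ W)
    (hcont : ContinuousOn W (Icc a b))
    (hQ : 0 ≤ Q)
    (hdense : ∀ x y, a ≤ x → x < y → y ≤ b → ∃ s, s ∈ Ioo x y ∧ DifferentiableAt ℝ W s)
    (hG : ∀ s ∈ Ioo a b, DifferentiableAt ℝ W s → deriv W s ≤ D + Q * (s - a)) :
    ∀ z ∈ Icc a b, W z ≤ W a + D * (z - a) + Q / 2 * (z - a) ^ 2 := by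
  have key := image_le_of_liminf_slope_right_le_deriv_boundary (f := W) (a := a) (b := b)
    (B := fun x => W a + D * (x - a) + Q / 2 * (x - a) ^ 2)
    (B' := fun x => D + Q * (x - a)) hcont
    (by simp)
    (by
      have : Continuous fun x : ℝ => W a + D * (x - a) + Q / 2 * (x - a) ^ 2 := by fun_prop
      exact this.continuousOn)
    (by
      intro x hx
      have h1 : HasDerivAt (fun y : ℝ => y - a) 1 x := (hasDerivAt_id x).sub_const a
      have h2 : HasDerivAt (fun y : ℝ => W a + D * (y - a) + Q / 2 * (y - a) ^ 2)
          (0 + D * 1 + Q / 2 * (↑2 * (x - a) ^ (2 - 1) * 1)) x :=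
        (((hasDerivAt_const x (W a)).add (h1.const_mul D)).add ((h1.pow 2).const_mul (Q / 2)))
      have h2' : HasDerivAt (fun y : ℝ => W a + D * (y - a) + Q / 2 * (y - a) ^ 2)
          (D + Q * (x - a)) x := by
        convert h2 using 1; push_cast; ring
      exact h2'.hasDerivWithinAt)
    ?_
  · exact key
  · intro x hx r hr
    replace hr : D + Q * (x - a) < r := hr
    have hxa : a ≤ x := hx.1
    have hxb : x < b := hx.2
    have hr' : 0 < r - (D + Q * (x - a)) := by linarith
    set η := (r - (D + Q * (x - a))) / (Q + 1) with hη
    have hη0 : 0 < η := div_pos hr' (by linarith)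
    have hmin : x < min (x + η) b := lt_min (by linarith) hxb
    obtain ⟨s, hs, hdiff⟩ := hdense x (min (x + η) b) hxa hmin (min_le_right _ _)
    have hsx : x < s := hs.1
    have hsb : s < b := lt_of_lt_of_le hs.2 (by
      exact le_trans (min_le_right _ _) le_rfl)
    have hsa : a < s := lt_of_le_of_lt hxa hsx
    have hsd : deriv W s ≤ D + Q * (s - a) := hG s ⟨hsa, hsb⟩ hdiff
    have hslope : slope W x s ≤ deriv W s :=
      hW.slope_le_deriv (mem_univ x) (mem_univ s) hsx hdiff
    have hsη : s - x < η := by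
      have := hs.2
      have : s < x + η := lt_of_lt_of_le this (min_le_left _ _)
      linarith
    have hmul : η * (Q + 1) = r - (D + Q * (x - a)) := by
      rw [hη]; field_simp
    have hlt : slope W x s < r := by
      have h5 : Q * (s - x) ≤ Q * η := mul_le_mul_of_nonneg_left hsη.le hQ
      have : D + Q * (s - a) = (D + Q * (x - a)) + Q * (s - x) := by ring
      nlinarith [hη0]
    have hev : ∀ᶠ z in 𝓝[>] x, slope W x z < r := by
      filter_upwards [Ioo_mem_nhdsGT_of_mem (⟨le_refl x, hsx⟩ : x ∈ Ico x s)] with z hz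
      have hmono := hW.slope_mono (mem_univ x)
      have hz1 : z ∈ univ \ {x} := ⟨mem_univ z, by simp [hz.1.ne']⟩
      have hz2 : s ∈ univ \ {x} := ⟨mem_univ s, by simp [hsx.ne']⟩
      have := hmono hz1 hz2 hz.2.le
      linarith
    exact hev.frequently

set_option maxHeartbeats 1600000 in
/-- **Second-derivative bound for inf-convolutions of supersolutions** (from the proof of
Proposition 3.1): if `u` is a nonnegative, nondecreasing, absolutely continuous viscosity
supersolution of `L*(u)=0` on `(0,∞)` which is `k₀`-Lipschitz on `[0,x₁]` (`k₀ ≥ 1`),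
`0 < x₀ < x₁`, `n² ≥ 4k₀/x₀`, and `v` is the inf-convolution
`v x = inf_{y ∈ [0,x₁]} (u y + n²(x-y)²/2)`, then at every point `x̄ ∈ [x₀,x₁]` where `v`
is twice differentiable, `v''(x̄) ≤ 8(c+β)u(x₁)/(σ²x₀²)`. -/
theorem inf_convolution_second_derivative_bound
    (p β c r σ : ℝ) (hp : 0 < p) (hβ : 0 < β) (hr : 0 < r) (hrc : r < c) (hσ : 0 < σ)
    (F : StieltjesFunction ℝ)
    (hF01 : ∀ x : ℝ, F x ∈ Icc (0 : ℝ) 1)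
    (hF0 : ∀ x : ℝ, x ≤ 0 → F x = 0)
    (hF1 : Filter.Tendsto (⇑F) Filter.atTop (nhds 1))
    (hFmean : IntegrableOn id (Ici (0 : ℝ)) F.measure)
    (u : ℝ → ℝ)
    (hnn : ∀ x ∈ Ici (0 : ℝ), 0 ≤ u x)
    (hmono : MonotoneOn u (Ici 0))
    (hAC : ∃ g : ℝ → ℝ, LocallyIntegrableOn g (Ici 0) volume ∧
      ∀ x ∈ Ici (0 : ℝ), u x = u 0 + ∫ t in (0 : ℝ)..x, g t)
    (hsuper : ∀ x ∈ Ioi (0 : ℝ), SupersolLAt p β c r σ F u x)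
    (x₀ x₁ : ℝ) (hx₀ : 0 < x₀) (hx01 : x₀ < x₁)
    (k₀ : ℝ) (hk₀ : 1 ≤ k₀)
    (hLip : ∀ x ∈ Icc (0 : ℝ) x₁, ∀ y ∈ Icc (0 : ℝ) x₁, |u x - u y| ≤ k₀ * |x - y|)
    (n : ℕ) (hn : 4 * k₀ / x₀ ≤ (n : ℝ) ^ 2)
    (v : ℝ → ℝ)
    (hv : ∀ x : ℝ, v x = ⨅ y : Icc (0 : ℝ) x₁, (u (y : ℝ) + (n : ℝ) ^ 2 * (x - (y : ℝ)) ^ 2 / 2))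
    (xb : ℝ) (hxb : xb ∈ Icc x₀ x₁)
    (hd1 : DifferentiableAt ℝ v xb) (hd2 : DifferentiableAt ℝ (deriv v) xb) :
    deriv (deriv v) xb ≤ 8 * (c + β) * u x₁ / (σ ^ 2 * x₀ ^ 2) := by
  set N : ℝ := (n : ℝ) ^ 2 with hNdef
  have hN0 : 0 < N := lt_of_lt_of_le (div_pos (by linarith) hx₀) hn
  haveI : Nonempty (Icc (0:ℝ) x₁) := ⟨⟨0, ⟨le_refl 0, by linarith⟩⟩⟩
  have hvle : ∀ (x : ℝ) (yy : Icc (0:ℝ) x₁), v x ≤ u yy + N * (x - yy) ^ 2 / 2 := by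
    intro x yy
    rw [hv x]
    refine ciInf_le ⟨0, ?_⟩ yy
    rintro _ ⟨zz, rfl⟩
    exact add_nonneg (hnn zz zz.2.1) (by positivity)
  -- continuity of u on [0, x₁]
  have hucont : ContinuousOn u (Icc 0 x₁) := by
    have hl : LipschitzOnWith (Real.toNNReal k₀) u (Icc 0 x₁) := by
      rw [lipschitzOnWith_iff_dist_le_mul]
      intro x hx y hy
      rw [Real.dist_eq, Real.dist_eq, Real.coe_toNNReal k₀ (by linarith)]
      exact hLip x hx y hy
    exact hl.continuousOn
  -- minimizer
  have hfc : ContinuousOn (fun y => u y + N * (xb - y) ^ 2 / 2) (Icc 0 x₁) :=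
    hucont.add (Continuous.continuousOn (by fun_prop))
  obtain ⟨ys, hysmem, hysmin⟩ :=
    isCompact_Icc.exists_isMinOn ⟨0, ⟨le_refl 0, by linarith⟩⟩ hfc
  have xbIcc : xb ∈ Icc (0:ℝ) x₁ := ⟨by linarith [hxb.1], hxb.2⟩
  have hvxb : v xb = u ys + N * (xb - ys) ^ 2 / 2 := by
    refine le_antisymm (hvle xb ⟨ys, hysmem⟩) ?_
    rw [hv xb]
    exact le_ciInf fun yy => isMinOn_iff.mp hysmin yy yy.2
  have hysxb : ys ≤ xb := by
    by_contra hlt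
    push_neg at hlt
    have h1 : v xb ≤ u xb := by
      have := hvle xb ⟨xb, xbIcc⟩; simpa using this
    have h2 : u xb ≤ u ys := hmono (mem_Ici.mpr xbIcc.1) (mem_Ici.mpr (le_trans xbIcc.1 hlt.le)) hlt.le
    have h3 : 0 < (xb - ys) ^ 2 := pow_two_pos_of_ne_zero (sub_ne_zero.mpr hlt.ne)
    have h4 := mul_pos hN0 h3
    linarith [hvxb, h1, h2, h4]
  have hdist : xb - ys ≤ x₀ / 2 := by
    have h1 : v xb ≤ u xb := by
      have := hvle xb ⟨xb, xbIcc⟩; simpa using this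
    have h2 : u xb - u ys ≤ k₀ * (xb - ys) := by
      have h := hLip xb xbIcc ys hysmem
      have habs := le_abs_self (u xb - u ys)
      rw [abs_of_nonneg (by linarith : (0:ℝ) ≤ xb - ys)] at h
      linarith
    have h3 : N * (xb - ys) ^ 2 / 2 ≤ k₀ * (xb - ys) := by linarith [hvxb, h1, h2]
    have h4 : 4 * k₀ ≤ N * x₀ := by
      rw [div_le_iff₀ hx₀] at hn; linarith
    rcases le_or_gt (xb - ys) 0 with hz | hz
    · linarith
    · have hNt : N * (xb - ys) ≤ 2 * k₀ := by nlinarith [h3, hz]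
      nlinarith [hNt, h4, hN0]
  have hys_half : x₀ / 2 ≤ ys := by linarith [hxb.1]
  have hys_pos : 0 < ys := by linarith
  set q := deriv (deriv v) xb with hq_def
  set d := deriv v xb with hd_def
  -- first derivative identity
  have hd_eq : d = N * (xb - ys) := by
    have h1 : HasDerivAt (fun x : ℝ => x - ys) 1 xb := (hasDerivAt_id xb).sub_const ys
    have h2 : HasDerivAt (fun x : ℝ => u ys + N * (x - ys) ^ 2 / 2)
        (0 + N * (↑2 * (xb - ys) ^ (2 - 1) * 1) / 2) xb :=
      (hasDerivAt_const xb (u ys)).add (((h1.pow 2).const_mul N).div_const 2)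
    have h3 : HasDerivAt (fun x : ℝ => u ys + N * (x - ys) ^ 2 / 2 - v x)
        (0 + N * (↑2 * (xb - ys) ^ (2 - 1) * 1) / 2 - d) xb := h2.sub hd1.hasDerivAt
    have hmin2 : IsLocalMin (fun x : ℝ => u ys + N * (x - ys) ^ 2 / 2 - v x) xb := by
      refine Filter.Eventually.of_forall fun z => ?_
      have hz := hvle z ⟨ys, hysmem⟩
      simp only
      linarith [hvxb]
    have h4 := hmin2.hasDerivAt_eq_zero h3
    norm_num at h4
    linarith [h4]
  have hd_nonneg : 0 ≤ d := by
    rw [hd_eq]; exact mul_nonneg hN0.le (by linarith)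
  -- little-o expansion of deriv v at xb
  have hTaylorG : ∀ ε : ℝ, 0 < ε → ∃ δ : ℝ, 0 < δ ∧ ∀ s : ℝ, |s - xb| ≤ δ →
      |deriv v s - d - (s - xb) * q| ≤ ε * |s - xb| := by
    intro ε hε
    have hD2 : HasDerivAt (deriv v) q xb := hd2.hasDerivAt
    have hlo := hasDerivAt_iff_isLittleO.mp hD2
    have h2 := hlo.bound hε
    rw [Metric.eventually_nhds_iff] at h2
    obtain ⟨δ, hδ, h3⟩ := h2
    refine ⟨δ / 2, by linarith, fun s hs => ?_⟩
    have h4 := h3 (show dist s xb < δ by rw [Real.dist_eq]; linarith)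
    simpa [Real.norm_eq_abs, smul_eq_mul, ← hd_def] using h4
  -- the convex conjugate-type function W
  set W : ℝ → ℝ := fun x => N * x ^ 2 / 2 - v x with hWdef
  have hWpoly : ∀ s : ℝ, HasDerivAt (fun x : ℝ => N * x ^ 2 / 2) (N * s) s := by
    intro s
    have h := ((hasDerivAt_pow 2 s).const_mul N).div_const 2
    refine h.congr_deriv ?_
    push_cast; ring
  have hWd : ∀ s : ℝ, DifferentiableAt ℝ v s → HasDerivAt W (N * s - deriv v s) s :=
    fun s hs => (hWpoly s).sub hs.hasDerivAt
  have hvdiff_of_W : ∀ s : ℝ, DifferentiableAt ℝ W s → DifferentiableAt ℝ v s := by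
    intro s hs
    have hveq : v = fun x => N * x ^ 2 / 2 - W x := by
      funext x; simp only [hWdef]; ring
    rw [hveq]
    exact ((hWpoly s).differentiableAt).sub hs
  have hconv : ConvexOn ℝ univ W := by
    refine ⟨convex_univ, ?_⟩
    intro x _ y _ aa bb ha hb hab
    simp only [smul_eq_mul, hWdef]
    have hb' : bb = 1 - aa := by linarith
    subst hb'
    have hgoal : ∀ yy : Icc (0:ℝ) x₁,
        N * (aa * x + (1 - aa) * y) ^ 2 / 2
          - (aa * (N * x ^ 2 / 2 - v x) + (1 - aa) * (N * y ^ 2 / 2 - v y))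
          ≤ u yy + N * ((aa * x + (1 - aa) * y) - yy) ^ 2 / 2 := by
      intro yy
      have t1 : 0 ≤ aa * (u yy + N * (x - yy) ^ 2 / 2 - v x) :=
        mul_nonneg ha (by have := hvle x yy; linarith)
      have t2 : 0 ≤ (1 - aa) * (u yy + N * (y - yy) ^ 2 / 2 - v y) :=
        mul_nonneg hb (by have := hvle y yy; linarith)
      have hid : u yy + N * ((aa * x + (1 - aa) * y) - yy) ^ 2 / 2
          - (N * (aa * x + (1 - aa) * y) ^ 2 / 2
            - (aa * (N * x ^ 2 / 2 - v x) + (1 - aa) * (N * y ^ 2 / 2 - v y)))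
          = aa * (u yy + N * (x - yy) ^ 2 / 2 - v x)
            + (1 - aa) * (u yy + N * (y - yy) ^ 2 / 2 - v y) := by ring
      linarith [t1, t2, hid]
    have hfin : N * (aa * x + (1 - aa) * y) ^ 2 / 2
        - (aa * (N * x ^ 2 / 2 - v x) + (1 - aa) * (N * y ^ 2 / 2 - v y))
        ≤ v (aa * x + (1 - aa) * y) := by
      rw [hv (aa * x + (1 - aa) * y)]
      exact le_ciInf fun yy => hgoal yy
    linarith [hfin]
  -- Lipschitz bound for v near xb
  have habsC : 0 < |xb| + 1 + x₁ := by
    have := abs_nonneg xb; linarith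
  have hJonce : ∀ x ∈ Icc (xb - 1) (xb + 1), ∀ x' ∈ Icc (xb - 1) (xb + 1),
      v x - v x' ≤ N * (|xb| + 1 + x₁) * |x - x'| := by
    intro x hx x' hx'
    have hbound : ∀ yy : Icc (0:ℝ) x₁,
        v x - N * (|xb| + 1 + x₁) * |x - x'| ≤ u yy + N * (x' - yy) ^ 2 / 2 := by
      intro yy
      have h1 := hvle x yy
      have hyy0 : 0 ≤ (yy:ℝ) := yy.2.1
      have hyy1 : (yy:ℝ) ≤ x₁ := yy.2.2
      have habs : |x + x' - 2 * yy| ≤ 2 * (|xb| + 1 + x₁) := by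
        have h2 := le_abs_self xb
        have h3 := neg_abs_le xb
        rw [abs_le]
        constructor
        · linarith [hx.1, hx'.1]
        · linarith [hx.2, hx'.2]
      have h5 : (x - x') * (x + x' - 2 * yy) ≤ |x - x'| * (2 * (|xb| + 1 + x₁)) := by
        calc (x - x') * (x + x' - 2 * yy) ≤ |(x - x') * (x + x' - 2 * yy)| := le_abs_self _
          _ = |x - x'| * |x + x' - 2 * yy| := abs_mul _ _
          _ ≤ |x - x'| * (2 * (|xb| + 1 + x₁)) :=
              mul_le_mul_of_nonneg_left habs (abs_nonneg _)
      have hid2 : (x - yy) ^ 2 - (x' - yy) ^ 2 = (x - x') * (x + x' - 2 * yy) := by ring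
      have h6 : (x - yy) ^ 2 ≤ (x' - yy) ^ 2 + |x - x'| * (2 * (|xb| + 1 + x₁)) := by
        linarith [h5, hid2]
      have h7 := mul_le_mul_of_nonneg_left h6 (le_of_lt (by positivity : (0:ℝ) < N / 2))
      have hid3 : N / 2 * ((x' - yy) ^ 2 + |x - x'| * (2 * (|xb| + 1 + x₁)))
          = N * (x' - yy) ^ 2 / 2 + N * (|xb| + 1 + x₁) * |x - x'| := by ring
      have hid4 : N / 2 * (x - yy) ^ 2 = N * (x - yy) ^ 2 / 2 := by ring
      linarith [h1, h7, hid3, hid4]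
    have h8 : v x - N * (|xb| + 1 + x₁) * |x - x'| ≤ v x' := by
      rw [hv x']
      exact le_ciInf fun yy => hbound yy
    linarith
  have hC0 : 0 ≤ N * (|xb| + 1 + x₁) := mul_nonneg hN0.le habsC.le
  have hlipJ : LipschitzOnWith (Real.toNNReal (N * (|xb| + 1 + x₁))) v (Icc (xb - 1) (xb + 1)) := by
    rw [lipschitzOnWith_iff_dist_le_mul]
    intro x hx y hy
    rw [Real.dist_eq, Real.dist_eq, Real.coe_toNNReal _ hC0, abs_sub_le_iff]
    refine ⟨hJonce x hx y hy, ?_⟩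
    rw [abs_sub_comm]
    exact hJonce y hy x hx
  have hvcontJ : ContinuousOn v (Icc (xb - 1) (xb + 1)) := hlipJ.continuousOn
  have hdense0 : ∀ a' b' : ℝ, xb - 1 ≤ a' → a' < b' → b' ≤ xb + 1 →
      ∃ s, s ∈ Ioo a' b' ∧ DifferentiableAt ℝ v s := by
    intro a' b' ha' hab' hb'
    have hae := hlipJ.ae_differentiableWithinAt_of_mem (μ := volume)
    by_contra hno
    push_neg at hno
    have hsub : Ioo a' b' ⊆ {x | ¬ (x ∈ Icc (xb - 1) (xb + 1) →
        DifferentiableWithinAt ℝ v (Icc (xb - 1) (xb + 1)) x)} := by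
      intro s hs
      simp only [mem_setOf_eq]
      intro hP
      have hsJ : s ∈ Icc (xb - 1) (xb + 1) := ⟨by linarith [hs.1], by linarith [hs.2]⟩
      have hmem : Icc (xb - 1) (xb + 1) ∈ 𝓝 s :=
        Icc_mem_nhds (by linarith [hs.1]) (by linarith [hs.2])
      exact hno s hs ((hP hsJ).differentiableAt hmem)
    have h0 := measure_mono_null hsub (ae_iff.mp hae)
    rw [Real.volume_Ioo] at h0
    simp only [ENNReal.ofReal_eq_zero] at h0
    linarith
  -- q ≤ N
  have hqn : q ≤ N := by
    by_contra hq'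
    push_neg at hq'
    have hε : 0 < (q - N) / 2 := by linarith
    obtain ⟨δ₀, hδ₀, hG⟩ := hTaylorG ((q - N) / 2) hε
    have hδ' : 0 < min δ₀ 1 := lt_min hδ₀ one_pos
    obtain ⟨s, hs, hsd⟩ := hdense0 xb (xb + min δ₀ 1) (by linarith) (by linarith)
      (by linarith [min_le_right δ₀ (1:ℝ)])
    have hsx : xb < s := hs.1
    have hsδ : s - xb ≤ δ₀ := by
      have := hs.2
      have := min_le_left δ₀ (1:ℝ)
      linarith
    have habs : |s - xb| ≤ δ₀ := by
      rw [abs_of_pos (by linarith)]; exact hsδ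
    have hGb := hG s habs
    rw [abs_of_pos (show (0:ℝ) < s - xb by linarith)] at hGb
    have h8 := (abs_le.mp hGb).1
    have hWs := hWd s hsd
    have hslope := hconv.slope_le_deriv (mem_univ xb) (mem_univ s) hsx hWs.differentiableAt
    rw [slope_def_field] at hslope
    have hWderiv : deriv W s = N * s - deriv v s := hWs.deriv
    have hup : v s ≤ v xb + d * (s - xb) + N * (s - xb) ^ 2 / 2 := by
      have hd_mul : d * (s - xb) = N * (xb - ys) * (s - xb) := by rw [hd_eq]
      have hid3 : u ys + N * (s - ys) ^ 2 / 2
          = (u ys + N * (xb - ys) ^ 2 / 2) + N * (xb - ys) * (s - xb)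
            + N * (s - xb) ^ 2 / 2 := by ring
      linarith [hvle s ⟨ys, hysmem⟩, hvxb, hid3, hd_mul]
    have hlow : (N * xb - d) * (s - xb) ≤ W s - W xb := by
      simp only [hWdef]
      have hid4 : (N * xb - d) * (s - xb)
          = N * s ^ 2 / 2 - N * xb ^ 2 / 2 - (d * (s - xb) + N * (s - xb) ^ 2 / 2) := by ring
      linarith [hup, hid4]
    have h7 : N * xb - d ≤ (W s - W xb) / (s - xb) := by
      rw [le_div_iff₀ (by linarith)]
      linarith [hlow]
    have h11 : deriv W s ≤ N * xb - d - (q - N) / 2 * (s - xb) := by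
      rw [hWderiv]
      have hid5 : N * s - (d + (s - xb) * q - (q - N) / 2 * (s - xb))
          = N * xb - d - (q - N) / 2 * (s - xb) := by ring
      linarith [h8, hid5]
    linarith [mul_pos hε (show (0:ℝ) < s - xb by linarith), hslope, h7, h11]
  -- two-sided second-order Taylor lower bound for v at xb
  have hTaylor : ∀ ε : ℝ, 0 < ε → ∃ δ : ℝ, 0 < δ ∧ ∀ z : ℝ, |z - xb| ≤ δ →
      v xb + d * (z - xb) + (q - ε) / 2 * (z - xb) ^ 2 ≤ v z := by
    intro ε hε
    obtain ⟨δ₀, hδ₀, hGb⟩ := hTaylorG (ε / 2) (by linarith)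
    refine ⟨min δ₀ 1, lt_min hδ₀ one_pos, ?_⟩
    set δ := min δ₀ 1 with hδdef
    have hδpos : 0 < δ := lt_min hδ₀ one_pos
    have hδ1 : δ ≤ 1 := min_le_right _ _
    have hδδ₀ : δ ≤ δ₀ := min_le_left _ _
    have hQ' : 0 ≤ N - q + ε / 2 := by linarith [hqn]
    -- right-side comparison
    have hcontW : ContinuousOn W (Icc xb (xb + δ)) := by
      have h1 : ContinuousOn (fun x : ℝ => N * x ^ 2 / 2) (Icc xb (xb + δ)) :=
        Continuous.continuousOn (by fun_prop)
      exact h1.sub (hvcontJ.mono (Icc_subset_Icc (by linarith) (by linarith)))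
    have hdenseW : ∀ x y, xb ≤ x → x < y → y ≤ xb + δ →
        ∃ s, s ∈ Ioo x y ∧ DifferentiableAt ℝ W s := by
      intro x y hx hxy hy
      obtain ⟨s, hsIoo, hds⟩ := hdense0 x y (by linarith) hxy (by linarith)
      exact ⟨s, hsIoo, (hWd s hds).differentiableAt⟩
    have hGR : ∀ s ∈ Ioo xb (xb + δ), DifferentiableAt ℝ W s →
        deriv W s ≤ (N * xb - d) + (N - q + ε / 2) * (s - xb) := by
      intro s hsmem hdWs
      have hdvs := hvdiff_of_W s hdWs
      rw [(hWd s hdvs).deriv]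
      have hspos : 0 < s - xb := by linarith [hsmem.1]
      have habs : |s - xb| ≤ δ₀ := by
        rw [abs_of_pos hspos]; linarith [hsmem.2, hδδ₀]
      have hGb2 := hGb s habs
      rw [abs_of_pos hspos] at hGb2
      have h8 := (abs_le.mp hGb2).1
      have hid : N * s - (d + (s - xb) * q - ε / 2 * (s - xb))
          = (N * xb - d) + (N - q + ε / 2) * (s - xb) := by ring
      linarith [h8, hid]
    have hR := infconv_core hconv hcontW hQ' hdenseW hGR
    -- reflected function for the left side
    set Wt : ℝ → ℝ := fun s => W (2 * xb - s) with hWtdef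
    have hconvt : ConvexOn ℝ univ Wt := by
      refine ⟨convex_univ, ?_⟩
      intro x _ y _ aa bb ha hb hab
      simp only [smul_eq_mul, hWtdef]
      have harg : 2 * xb - (aa * x + bb * y) = aa * (2 * xb - x) + bb * (2 * xb - y) := by
        linear_combination (-2 * xb) * hab
      rw [harg]
      have h5 := hconv.2 (mem_univ (2 * xb - x)) (mem_univ (2 * xb - y)) ha hb hab
      simpa using h5
    have hreflD : ∀ t : ℝ, HasDerivAt (fun s : ℝ => 2 * xb - s) (-1) t := by
      intro t
      simpa using (hasDerivAt_id t).const_sub (2 * xb)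
    have hWtD : ∀ s : ℝ, DifferentiableAt ℝ v s →
        HasDerivAt Wt ((N * s - deriv v s) * (-1)) (2 * xb - s) := by
      intro s hds
      have h := hWd s hds
      rw [show s = 2 * xb - (2 * xb - s) by ring] at h
      have h2 := h.comp (2 * xb - s) (hreflD (2 * xb - s))
      rw [show 2 * xb - (2 * xb - s) = s by ring] at h2
      exact h2
    have hdenseT : ∀ x y, xb ≤ x → x < y → y ≤ xb + δ →
        ∃ s, s ∈ Ioo x y ∧ DifferentiableAt ℝ Wt s := by
      intro x y hx hxy hy
      obtain ⟨s, hsIoo, hds⟩ := hdense0 (2 * xb - y) (2 * xb - x)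
        (by linarith) (by linarith) (by linarith)
      exact ⟨2 * xb - s, ⟨by linarith [hsIoo.2], by linarith [hsIoo.1]⟩,
        (hWtD s hds).differentiableAt⟩
    have hWc : W = Wt ∘ (fun t : ℝ => 2 * xb - t) := by
      funext t
      simp only [hWtdef, Function.comp_apply]
      rw [show 2 * xb - (2 * xb - t) = t by ring]
    have hGT : ∀ s ∈ Ioo xb (xb + δ), DifferentiableAt ℝ Wt s →
        deriv Wt s ≤ (d - N * xb) + (N - q + ε / 2) * (s - xb) := by
      intro s hsmem hdWt
      have h1 : DifferentiableAt ℝ Wt (2 * xb - (2 * xb - s)) := by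
        rw [show 2 * xb - (2 * xb - s) = s by ring]; exact hdWt
      have h2 : DifferentiableAt ℝ (fun t : ℝ => 2 * xb - t) (2 * xb - s) :=
        (hreflD _).differentiableAt
      have hdW : DifferentiableAt ℝ W (2 * xb - s) := by
        rw [hWc]; exact DifferentiableAt.comp (2 * xb - s) h1 h2
      have hdv2 : DifferentiableAt ℝ v (2 * xb - s) := hvdiff_of_W _ hdW
      have h4 := hWtD (2 * xb - s) hdv2
      rw [show 2 * xb - (2 * xb - s) = s by ring] at h4
      rw [h4.deriv]
      have hspos : 0 < s - xb := by linarith [hsmem.1]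
      have habs2 : |2 * xb - s - xb| ≤ δ₀ := by
        rw [show 2 * xb - s - xb = -(s - xb) by ring, abs_neg, abs_of_pos hspos]
        linarith [hsmem.2, hδδ₀]
      have h8 := hGb (2 * xb - s) habs2
      rw [show 2 * xb - s - xb = -(s - xb) by ring, abs_neg, abs_of_pos hspos] at h8
      have h9 := (abs_le.mp h8).2
      have hid9 : d + -(s - xb) * q + ε / 2 * (s - xb) - N * (2 * xb - s)
          = (d - N * xb) + (N - q + ε / 2) * (s - xb) := by ring
      have hid8 : (N * (2 * xb - s) - deriv v (2 * xb - s)) * (-1)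
          = deriv v (2 * xb - s) - N * (2 * xb - s) := by ring
      linarith [h9, hid8, hid9]
    have hcontWt : ContinuousOn Wt (Icc xb (xb + δ)) := by
      have h1 : ContinuousOn W (Icc (xb - 1) (xb + 1)) := by
        have h2 : ContinuousOn (fun x : ℝ => N * x ^ 2 / 2) (Icc (xb - 1) (xb + 1)) :=
          Continuous.continuousOn (by fun_prop)
        exact h2.sub hvcontJ
      have h3 : ContinuousOn (fun s : ℝ => 2 * xb - s) (Icc xb (xb + δ)) :=
        Continuous.continuousOn (by fun_prop)
      exact h1.comp h3 (fun s hs => ⟨by linarith [hs.2, hδ1], by linarith [hs.1]⟩)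
    have hL := infconv_core hconvt hcontWt hQ' hdenseT hGT
    -- combine the two sides
    intro z hz
    have hz1 := (abs_le.mp hz).1
    have hz2 := (abs_le.mp hz).2
    have hε4 : (0:ℝ) ≤ ε / 4 := by linarith
    have hsq := sq_nonneg (z - xb)
    rcases le_or_gt xb z with hcase | hcase
    · have hzmem : z ∈ Icc xb (xb + δ) := ⟨hcase, by linarith⟩
      have h9 := hR z hzmem
      simp only [hWdef] at h9
      have hid6 : N * xb ^ 2 / 2 + (N * xb - d) * (z - xb)
            + (N - q + ε / 2) / 2 * (z - xb) ^ 2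
          = N * z ^ 2 / 2 - d * (z - xb) - (q - ε / 2) / 2 * (z - xb) ^ 2 := by ring
      linarith [h9, hid6, mul_nonneg hε4 hsq]
    · have hzmem : 2 * xb - z ∈ Icc xb (xb + δ) := ⟨by linarith, by linarith⟩
      have h9 := hL (2 * xb - z) hzmem
      have hWt1 : Wt (2 * xb - z) = N * z ^ 2 / 2 - v z := by
        have he : 2 * xb - (2 * xb - z) = z := by ring
        simp only [hWtdef, hWdef, he]
      have hWt2 : Wt xb = N * xb ^ 2 / 2 - v xb := by
        have he : 2 * xb - xb = xb := by ring
        simp only [hWtdef, hWdef, he]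
      rw [hWt1, hWt2] at h9
      have hid7 : N * xb ^ 2 / 2 + (d - N * xb) * (2 * xb - z - xb)
            + (N - q + ε / 2) / 2 * (2 * xb - z - xb) ^ 2
          = N * z ^ 2 / 2 - d * (z - xb) - (q - ε / 2) / 2 * (z - xb) ^ 2 := by ring
      linarith [h9, hid7, mul_nonneg hε4 hsq]
  -- trivial case and main case
  rcases le_or_gt q 0 with hq0 | hqpos
  · have hux₁0 : 0 ≤ u x₁ := hnn x₁ (le_of_lt (lt_trans hx₀ hx01))
    have hnum : 0 ≤ 8 * (c + β) * u x₁ :=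
      mul_nonneg (mul_nonneg (by norm_num) (by linarith)) hux₁0
    have hRHS0 : 0 ≤ 8 * (c + β) * u x₁ / (σ ^ 2 * x₀ ^ 2) :=
      div_nonneg hnum (by positivity)
    linarith
  -- q > 0 : the minimizer is interior
  have hux₁0 : 0 ≤ u x₁ := hnn x₁ (le_of_lt (lt_trans hx₀ hx01))
  have hys_lt : ys < x₁ := by
    rcases eq_or_lt_of_le hysmem.2 with heq | hlt
    · exfalso
      have hxbys : xb = ys := le_antisymm (by rw [heq]; exact hxb.2) hysxb
      obtain ⟨δ, hδ, hT⟩ := hTaylor (q / 2) (by linarith)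
      have hmin0 : 0 < min δ xb := lt_min hδ (by linarith [hxb.1])
      set z := xb - min δ xb / 2 with hzdef
      have hz1 : |z - xb| ≤ δ := by
        rw [hzdef, show xb - min δ xb / 2 - xb = -(min δ xb / 2) by ring, abs_neg,
          abs_of_pos (by linarith)]
        linarith [min_le_left δ xb]
      have h2 := hT z hz1
      have hzmem : z ∈ Icc (0:ℝ) x₁ := by
        constructor
        · rw [hzdef]; linarith [min_le_right δ xb, hxb.1]
        · rw [hzdef]; linarith [hxb.2]
      have h3 : v z ≤ u z := by
        have := hvle z ⟨z, hzmem⟩; simpa using this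
      have h4 : u z ≤ u xb := hmono hzmem.1 (mem_Ici.mpr (by linarith [hxb.1]))
        (by rw [hzdef]; linarith)
      have h5 : v xb = u xb := by rw [hvxb, ← hxbys]; simp
      have hd0 : d = 0 := by rw [hd_eq, ← hxbys]; simp
      have h6 : 0 < (z - xb) ^ 2 :=
        pow_two_pos_of_ne_zero (sub_ne_zero.mpr (by rw [hzdef]; intro hc; linarith [hmin0]))
      have hd0mul : d * (z - xb) = 0 := by rw [hd0]; ring
      have hqq := mul_pos (show (0:ℝ) < (q - q / 2) / 2 by linarith) h6
      rw [hd0] at h2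
      nlinarith [h2, h3, h4, h5, hqq]
    · exact hlt
  -- key estimate for every ε > 0
  have hkey : ∀ ε : ℝ, 0 < ε → σ ^ 2 * ys ^ 2 * (q - ε) ≤ 2 * (c + β) * u x₁ := by
    intro ε hε
    obtain ⟨δ, hδ, hT⟩ := hTaylor ε hε
    have hρ0 : 0 < min δ (x₁ - ys) := lt_min hδ (by linarith)
    set ρ := min δ (x₁ - ys) with hρdef
    set b2 : ℝ := (q - ε) / 2 with hb2
    set K : ℝ := u x₁ / ρ ^ 4 + |d| / ρ ^ 3 + |b2| / ρ ^ 2 + 1 with hK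
    have hK0 : 0 ≤ K := by
      rw [hK]
      have k1 : 0 ≤ u x₁ / ρ ^ 4 := div_nonneg hux₁0 (by positivity)
      have k2 : 0 ≤ |d| / ρ ^ 3 := div_nonneg (abs_nonneg d) (by positivity)
      have k3 : 0 ≤ |b2| / ρ ^ 2 := div_nonneg (abs_nonneg b2) (by positivity)
      linarith
    set φ : ℝ → ℝ := fun y => u ys + d * (y - ys) + b2 * (y - ys) ^ 2 - K * (y - ys) ^ 4
      with hφdef
    have hφys : φ ys = u ys := by simp [hφdef]
    have hsubC : ContDiff ℝ 2 (fun y : ℝ => y - ys) := contDiff_id.sub contDiff_const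
    have hφC2 : ContDiff ℝ 2 φ :=
      ((contDiff_const.add (contDiff_const.mul hsubC)).add
        (contDiff_const.mul (hsubC.pow 2))).sub (contDiff_const.mul (hsubC.pow 4))
    have hψ : deriv φ = fun y => d + 2 * b2 * (y - ys) - 4 * K * (y - ys) ^ 3 := by
      funext y
      have h1 : HasDerivAt (fun t : ℝ => t - ys) 1 y := (hasDerivAt_id y).sub_const ys
      have h2 : HasDerivAt φ
          (0 + d * 1 + b2 * (((2:ℕ):ℝ) * (y - ys) ^ (2 - 1) * 1)
            - K * (((4:ℕ):ℝ) * (y - ys) ^ (4 - 1) * 1)) y :=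
        (((hasDerivAt_const y (u ys)).add (h1.const_mul d)).add
          ((h1.pow 2).const_mul b2)).sub ((h1.pow 4).const_mul K)
      rw [h2.deriv]
      push_cast
      ring
    have hφ'ys : deriv φ ys = d := by rw [hψ]; norm_num
    have hφ''ys : deriv (deriv φ) ys = q - ε := by
      rw [hψ]
      have h1 : HasDerivAt (fun t : ℝ => t - ys) 1 ys := (hasDerivAt_id ys).sub_const ys
      have h2 : HasDerivAt (fun y : ℝ => d + 2 * b2 * (y - ys) - 4 * K * (y - ys) ^ 3)
          (0 + 2 * b2 * 1 - 4 * K * (((3:ℕ):ℝ) * (ys - ys) ^ (3 - 1) * 1)) ys :=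
        ((hasDerivAt_const ys d).add (h1.const_mul (2 * b2))).sub
          ((h1.pow 3).const_mul (4 * K))
      rw [h2.deriv, hb2]
      push_cast
      ring
    have husys : u ys ≤ u x₁ :=
      hmono (mem_Ici.mpr hys_pos.le) (mem_Ici.mpr (by linarith)) hysmem.2
    have hfar : ∀ t : ℝ, ρ ≤ |t| → u ys + d * t + b2 * t ^ 2 - K * t ^ 4 ≤ 0 := by
      intro t ht
      have habs4 : |t| ^ 4 = t ^ 4 := by
        rw [← abs_pow]; exact abs_of_nonneg (by positivity)
      have k1 : ρ ^ 4 ≤ t ^ 4 := by rw [← habs4]; exact pow_le_pow_left₀ hρ0.le ht 4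
      have k2 : |t| * ρ ^ 3 ≤ t ^ 4 := by
        have h3 := pow_le_pow_left₀ hρ0.le ht 3
        have h4 : |t| * ρ ^ 3 ≤ |t| * |t| ^ 3 := mul_le_mul_of_nonneg_left h3 (abs_nonneg t)
        have h5 : |t| * |t| ^ 3 = |t| ^ 4 := by ring
        linarith [habs4]
      have k3 : t ^ 2 * ρ ^ 2 ≤ t ^ 4 := by
        have h3 := pow_le_pow_left₀ hρ0.le ht 2
        have h6 : t ^ 2 = |t| ^ 2 := by rw [← abs_pow]; exact (abs_of_nonneg (by positivity)).symm
        have h4 : t ^ 2 * ρ ^ 2 ≤ t ^ 2 * |t| ^ 2 :=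
          mul_le_mul_of_nonneg_left h3 (by positivity)
        have h5 : t ^ 2 * |t| ^ 2 = |t| ^ 4 := by rw [h6]; ring
        linarith [habs4]
      have ht4 : (0:ℝ) ≤ t ^ 4 := by positivity
      have e1 : u x₁ ≤ u x₁ / ρ ^ 4 * t ^ 4 := by
        rw [div_mul_eq_mul_div, le_div_iff₀ (by positivity)]
        exact mul_le_mul_of_nonneg_left k1 hux₁0
      have e2 : d * t ≤ |d| / ρ ^ 3 * t ^ 4 := by
        rw [div_mul_eq_mul_div, le_div_iff₀ (by positivity)]
        have hdt : d * t ≤ |d| * |t| := by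
          calc d * t ≤ |d * t| := le_abs_self _
            _ = |d| * |t| := abs_mul d t
        have g1 := mul_le_mul_of_nonneg_right hdt (by positivity : (0:ℝ) ≤ ρ ^ 3)
        have g2 := mul_le_mul_of_nonneg_left k2 (abs_nonneg d)
        have g3 : |d| * |t| * ρ ^ 3 = |d| * (|t| * ρ ^ 3) := by ring
        linarith
      have e3 : b2 * t ^ 2 ≤ |b2| / ρ ^ 2 * t ^ 4 := by
        have hbt : b2 * t ^ 2 ≤ |b2| * t ^ 2 :=
          mul_le_mul_of_nonneg_right (le_abs_self b2) (sq_nonneg t)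
        have g1 := mul_le_mul_of_nonneg_right hbt (by positivity : (0:ℝ) ≤ ρ ^ 2)
        have g2 := mul_le_mul_of_nonneg_left k3 (abs_nonneg b2)
        have g3 : |b2| * t ^ 2 * ρ ^ 2 = |b2| * (t ^ 2 * ρ ^ 2) := by ring
        have e3' : b2 * t ^ 2 * ρ ^ 2 ≤ |b2| * t ^ 4 := by linarith
        have e3'' := (le_div_iff₀ (by positivity : (0:ℝ) < ρ ^ 2)).mpr e3'
        have g4 : |b2| * t ^ 4 / ρ ^ 2 = |b2| / ρ ^ 2 * t ^ 4 := by ring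
        linarith [e3'', g4]
      rw [hK]
      have hexp : (u x₁ / ρ ^ 4 + |d| / ρ ^ 3 + |b2| / ρ ^ 2 + 1) * t ^ 4
          = u x₁ / ρ ^ 4 * t ^ 4 + |d| / ρ ^ 3 * t ^ 4 + |b2| / ρ ^ 2 * t ^ 4 + t ^ 4 := by
        ring
      linarith [e1, e2, e3, husys, ht4, hexp]
    have hφle : ∀ y : ℝ, 0 < y → φ y ≤ u y := by
      intro y hy
      rcases le_or_gt (|y - ys|) ρ with hcase | hcase
      · have hyx₁ : y ≤ x₁ := by
          have := (abs_le.mp hcase).2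
          have := min_le_right δ (x₁ - ys)
          linarith
        have hymem : y ∈ Icc (0:ℝ) x₁ := ⟨hy.le, hyx₁⟩
        have hzle : |y + (xb - ys) - xb| ≤ δ := by
          rw [show y + (xb - ys) - xb = y - ys by ring]
          exact le_trans hcase (min_le_left _ _)
        have hT1 := hT (y + (xb - ys)) hzle
        have hle : v (y + (xb - ys)) ≤ u y + N * ((y + (xb - ys)) - y) ^ 2 / 2 :=
          hvle (y + (xb - ys)) ⟨y, hymem⟩
        have hKt : 0 ≤ K * (y - ys) ^ 4 := mul_nonneg hK0 (by positivity)
        simp only [hφdef]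
        linarith [hT1, hle, hvxb, hKt]
      · have := hfar (y - ys) hcase.le
        have hy0 := hnn y (le_of_lt hy)
        simp only [hφdef]
        linarith
    have hφmin : ∀ y ∈ Ioi (0:ℝ), u ys - φ ys ≤ u y - φ y := by
      intro y hy
      rw [hφys]
      have := hφle y (mem_Ioi.mp hy)
      linarith
    have hsup := hsuper ys (mem_Ioi.mpr hys_pos) φ hφC2 hφmin
    have hbddA : BddAbove (range fun γ : Icc (0:ℝ) 1 => Lg p β c r σ F (γ:ℝ) u φ ys) := by
      refine ⟨|σ ^ 2 * ys ^ 2 * deriv (deriv φ) ys / 2| + |p * deriv φ ys|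
        + |r * ys * deriv φ ys| + |(c + β) * u ys|
        + |β * ∫ α in Icc (0:ℝ) ys, u (ys - α) ∂F.measure|, ?_⟩
      rintro x ⟨γ, rfl⟩
      obtain ⟨hγ0, hγ1⟩ := γ.2
      simp only [Lg]
      have hγsq : (γ:ℝ) ^ 2 ≤ 1 := by
        calc (γ:ℝ) ^ 2 ≤ 1 ^ 2 := pow_le_pow_left₀ hγ0 hγ1 2
          _ = 1 := one_pow 2
      have e1 : σ ^ 2 * (γ:ℝ) ^ 2 * ys ^ 2 * deriv (deriv φ) ys / 2
          ≤ |σ ^ 2 * ys ^ 2 * deriv (deriv φ) ys / 2| := by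
        calc σ ^ 2 * (γ:ℝ) ^ 2 * ys ^ 2 * deriv (deriv φ) ys / 2
            = (γ:ℝ) ^ 2 * (σ ^ 2 * ys ^ 2 * deriv (deriv φ) ys / 2) := by ring
          _ ≤ (γ:ℝ) ^ 2 * |σ ^ 2 * ys ^ 2 * deriv (deriv φ) ys / 2| :=
              mul_le_mul_of_nonneg_left (le_abs_self _) (sq_nonneg _)
          _ ≤ 1 * |σ ^ 2 * ys ^ 2 * deriv (deriv φ) ys / 2| :=
              mul_le_mul_of_nonneg_right hγsq (abs_nonneg _)
          _ = |σ ^ 2 * ys ^ 2 * deriv (deriv φ) ys / 2| := one_mul _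
      have e2 : (p + r * (γ:ℝ) * ys) * deriv φ ys
          ≤ |p * deriv φ ys| + |r * ys * deriv φ ys| := by
        have g2 : (p + r * (γ:ℝ) * ys) * deriv φ ys
            = p * deriv φ ys + (γ:ℝ) * (r * ys * deriv φ ys) := by ring
        have g3 : (γ:ℝ) * (r * ys * deriv φ ys) ≤ |r * ys * deriv φ ys| := by
          calc (γ:ℝ) * (r * ys * deriv φ ys) ≤ (γ:ℝ) * |r * ys * deriv φ ys| :=
              mul_le_mul_of_nonneg_left (le_abs_self _) hγ0
            _ ≤ 1 * |r * ys * deriv φ ys| := mul_le_mul_of_nonneg_right hγ1 (abs_nonneg _)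
            _ = |r * ys * deriv φ ys| := one_mul _
        linarith [le_abs_self (p * deriv φ ys), g2, g3]
      have e3 : -((c + β) * u ys) ≤ |(c + β) * u ys| := neg_le_abs _
      have e4 : β * ∫ α in Icc (0:ℝ) ys, u (ys - α) ∂F.measure
          ≤ |β * ∫ α in Icc (0:ℝ) ys, u (ys - α) ∂F.measure| := le_abs_self _
      linarith
    have h1mem : (1:ℝ) ∈ Icc (0:ℝ) 1 := ⟨zero_le_one, le_refl 1⟩
    have hLg1 : Lg p β c r σ F 1 u φ ys ≤ 0 := by
      refine le_trans ?_ hsup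
      rw [Lstar]
      have hle0 := le_ciSup hbddA (⟨1, h1mem⟩ : Icc (0:ℝ) 1)
      simpa using hle0
    have hI0 : 0 ≤ ∫ α in Icc (0:ℝ) ys, u (ys - α) ∂F.measure :=
      setIntegral_nonneg measurableSet_Icc (fun α hα => hnn _ (sub_nonneg.mpr hα.2))
    simp only [Lg, one_pow, mul_one] at hLg1
    rw [hφ''ys, hφ'ys] at hLg1
    have hpd : 0 ≤ (p + r * ys) * d :=
      mul_nonneg (add_nonneg hp.le (mul_nonneg hr.le hys_pos.le)) hd_nonneg
    have hcβ : (0:ℝ) < c + β := by linarith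
    have hcmul := mul_le_mul_of_nonneg_left husys hcβ.le
    have hβI := mul_nonneg hβ.le hI0
    linarith [hLg1, hpd, hI0, hcmul, hβI]
  -- pass to the limit ε → 0
  have hkey2 : σ ^ 2 * ys ^ 2 * q ≤ 2 * (c + β) * u x₁ := by
    by_contra hcon
    push_neg at hcon
    have hpos : (0:ℝ) < σ ^ 2 * ys ^ 2 := by positivity
    set ε := (σ ^ 2 * ys ^ 2 * q - 2 * (c + β) * u x₁) / (2 * (σ ^ 2 * ys ^ 2)) with hεdef
    have hε0 : 0 < ε := div_pos (by linarith) (by linarith)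
    have hcancel : σ ^ 2 * ys ^ 2 * ε
        = (σ ^ 2 * ys ^ 2 * q - 2 * (c + β) * u x₁) / 2 := by
      rw [hεdef]
      field_simp
    have hexp : σ ^ 2 * ys ^ 2 * (q - ε) = σ ^ 2 * ys ^ 2 * q - σ ^ 2 * ys ^ 2 * ε := by ring
    linarith [hkey ε hε0, hcancel, hexp]
  have h1 : x₀ ^ 2 / 4 ≤ ys ^ 2 := by
    have hm := mul_nonneg (show (0:ℝ) ≤ ys - x₀ / 2 by linarith)
      (show (0:ℝ) ≤ ys + x₀ / 2 by linarith)
    have hid : (ys - x₀ / 2) * (ys + x₀ / 2) = ys ^ 2 - x₀ ^ 2 / 4 := by ring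
    linarith
  rw [le_div_iff₀ (mul_pos (pow_pos hσ 2) (pow_pos hx₀ 2))]
  have hmul2 := mul_le_mul_of_nonneg_left h1 (mul_nonneg (sq_nonneg σ) hqpos.le)
  linarith [hkey2, hmul2]
end

section
/- Assume F has a bounded density and let W be the unique increasing twice continuously differentiable solution of L*(W)=0 on (0,∞) with W(0)=1. Then for every x>0 the function γ̃(W), defined by γ̃(W)(x) = −rW'(x)/(σ²xW''(x)) if this quantity lies in (0,1] and γ̃(W)(x)=1 otherwise, satisfies γ̃(W)(x) = min{ 1, 2( M(W)(x) − pW'(x) ) / ( r x W'(x) ) }. -/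
open MeasureTheory Set Filter

/-- `W` is an increasing classical (twice continuously differentiable) solution of
`L*(W) = 0` on `(0,∞)` with boundary condition `W 0 = 1`. -/
def IsSolW (p β c r σ : ℝ) (F : StieltjesFunction ℝ) (W : ℝ → ℝ) : Prop :=
  StrictMonoOn W (Ici 0) ∧ ContinuousOn W (Ici 0) ∧ ContDiffOn ℝ 2 W (Ioi 0) ∧
    W 0 = 1 ∧ ∀ x ∈ Ioi (0 : ℝ), Lstar p β c r σ F W W x = 0

/-- The optimal investment fraction `γ̃(W)(x)`: the vertex `-rW'(x)/(σ²xW''(x))` of the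
quadratic `γ ↦ L_γ(W)(x)` if it lies in `(0,1]`, and `1` otherwise. -/
noncomputable def gammaTilde (r σ : ℝ) (W : ℝ → ℝ) (x : ℝ) : ℝ :=
  if -(r * deriv W x) / (σ ^ 2 * x * deriv (deriv W) x) ∈ Ioc (0 : ℝ) 1 then
    -(r * deriv W x) / (σ ^ 2 * x * deriv (deriv W) x)
  else 1

/-- `M(u)(x) = (c+β)u(x) - β ∫₀ˣ u(x-α) dF(α)`. -/
noncomputable def Mop (β c : ℝ) (F : StieltjesFunction ℝ) (u : ℝ → ℝ) (x : ℝ) : ℝ :=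
  (c + β) * u x - β * ∫ α in Icc (0 : ℝ) x, u (x - α) ∂F.measure

open Topology

set_option maxHeartbeats 1000000


lemma quad_key (A b d : ℝ) (hb : 0 < b)
    (hle : ∀ γ ∈ Icc (0:ℝ) 1, A*γ^2 + b*γ + d ≤ 0)
    (hex : ∃ γ₀ ∈ Icc (0:ℝ) 1, A*γ₀^2 + b*γ₀ + d = 0) :
    (if -b/(2*A) ∈ Ioc (0:ℝ) 1 then -b/(2*A) else 1) = min 1 (-(2*d)/b) := by
  obtain ⟨γ₀, hγ₀, h0⟩ := hex
  rcases lt_or_ge (2*A + b) 0 with h1 | h1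
  · have hA : A < 0 := by nlinarith
    have hveq : -b/(2*A) = b / (-(2*A)) := by rw [div_neg, neg_div]
    have hpos : 0 < -(2*A) := by linarith
    have hv0 : 0 < -b/(2*A) := by rw [hveq]; exact div_pos hb hpos
    have hv1 : -b/(2*A) ≤ 1 := by rw [hveq]; exact (div_le_one hpos).2 (by linarith)
    rw [if_pos (mem_Ioc.mpr ⟨hv0, hv1⟩)]
    set v := -b/(2*A) with hv
    have hAv : 2*A*v = -b := by
      rw [hv]; field_simp [hA.ne]
    have hqv_le : A*v^2 + b*v + d ≤ 0 := hle v ⟨le_of_lt hv0, hv1⟩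
    have hqv_ge : 0 ≤ A*v^2 + b*v + d := by
      nlinarith [mul_nonneg (neg_nonneg.2 hA.le) (sq_nonneg (γ₀ - v)), h0, hAv]
    have hqv : A*v^2 + b*v + d = 0 := le_antisymm hqv_le hqv_ge
    have hd : d = -(b*v/2) := by linear_combination hqv - v/2 * hAv
    have hrhs : -(2*d)/b = v := by rw [hd]; field_simp
    rw [hrhs, min_eq_right hv1]
  · have hq1le := hle 1 ⟨zero_le_one, le_refl 1⟩
    have hq1ge : 0 ≤ A*1^2+b*1+d := by
      nlinarith [mul_nonneg (mul_nonneg (sub_nonneg.2 hγ₀.2) h1) (by linarith [hγ₀.1] : (0:ℝ) ≤ 1 + γ₀),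
        mul_nonneg hb.le (sq_nonneg (1 - γ₀)), h0]
    have hq1 : A + b + d = 0 := by nlinarith
    have hm : (1:ℝ) ≤ -(2*d)/b := by rw [le_div_iff₀ hb]; nlinarith
    rw [min_eq_left hm]
    split_ifs with hcond
    · obtain ⟨hc0, hc1⟩ := hcond
      have hA : A < 0 := by
        rcases lt_trichotomy A 0 with h|h|h
        · exact h
        · rw [h] at hc0; norm_num at hc0
        · have : -b/(2*A) < 0 := div_neg_of_neg_of_pos (by linarith) (by linarith)
          linarith
      have hveq : -b/(2*A) = b / (-(2*A)) := by rw [div_neg, neg_div]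
      have hpos : 0 < -(2*A) := by linarith
      rw [hveq] at hc1 ⊢
      have hble : b ≤ -(2*A) := (div_le_one hpos).1 hc1
      have hbe : b = -(2*A) := le_antisymm hble (by linarith)
      rw [hbe]; field_simp; exact div_self hA.ne
    · rfl

lemma main_goal
    (p β c r σ : ℝ) (hp : 0 < p) (hβ : 0 < β) (hr : 0 < r) (hrc : r < c) (hσ : 0 < σ)
    (F : StieltjesFunction ℝ)
    (hF01 : ∀ x : ℝ, F x ∈ Icc (0 : ℝ) 1)
    (hF0 : ∀ x : ℝ, x ≤ 0 → F x = 0)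
    (W : ℝ → ℝ)
    (hmono : StrictMonoOn W (Ici 0)) (hcont : ContinuousOn W (Ici 0))
    (hC2 : ContDiffOn ℝ 2 W (Ioi 0)) (hW0 : W 0 = 1)
    (heq : ∀ x ∈ Ioi (0 : ℝ), (⨆ γ : Icc (0:ℝ) 1,
      (σ ^ 2 * ((γ:ℝ)) ^ 2 * x ^ 2 * deriv (deriv W) x / 2 + (p + r * (γ:ℝ) * x) * deriv W x
    - (c + β) * W x + β * ∫ α in Icc (0 : ℝ) x, W (x - α) ∂F.measure)) = 0)
    (x : ℝ) (hx : x ∈ Ioi (0:ℝ)) :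
    (if -(r * deriv W x) / (σ ^ 2 * x * deriv (deriv W) x) ∈ Ioc (0 : ℝ) 1 then
      -(r * deriv W x) / (σ ^ 2 * x * deriv (deriv W) x) else 1) =
      min 1 (2 * (((c + β) * W x - β * ∫ α in Icc (0 : ℝ) x, W (x - α) ∂F.measure)
        - p * deriv W x) / (r * x * deriv W x)) := by
  have hx0 : (0:ℝ) < x := hx
  set M : ℝ := (c + β) * W x - β * ∫ α in Icc (0 : ℝ) x, W (x - α) ∂F.measure with hM_def
  set A : ℝ := σ^2 * x^2 * deriv (deriv W) x / 2 with hA_def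
  set b : ℝ := r * x * deriv W x with hb_def
  set d : ℝ := p * deriv W x - M with hd_def
  -- the quadratic identity
  have hLg : ∀ γ : ℝ, σ ^ 2 * γ ^ 2 * x ^ 2 * deriv (deriv W) x / 2
      + (p + r * γ * x) * deriv W x - (c + β) * W x
      + β * ∫ α in Icc (0 : ℝ) x, W (x - α) ∂F.measure = A*γ^2 + b*γ + d := by
    intro γ; rw [hA_def, hb_def, hd_def, hM_def]; ring
  -- attain the max of the quadratic on [0,1]
  obtain ⟨γ₀, hγ₀, hmax⟩ := isCompact_Icc.exists_isMaxOn (nonempty_Icc.mpr zero_le_one)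
    ((by continuity : Continuous (fun γ : ℝ => A*γ^2+b*γ+d)).continuousOn)
  have hsup : (⨆ γ : Icc (0:ℝ) 1, (A*(γ:ℝ)^2+b*(γ:ℝ)+d)) = A*γ₀^2+b*γ₀+d := by
    apply le_antisymm
    · exact ciSup_le fun γ => hmax γ.2
    · exact le_ciSup ⟨A*γ₀^2+b*γ₀+d, by rintro y ⟨γ, rfl⟩; exact hmax γ.2⟩
        (⟨γ₀, hγ₀⟩ : Icc (0:ℝ) 1)
  have hiSup_eq : (⨆ γ : Icc (0:ℝ) 1, (A*(γ:ℝ)^2+b*(γ:ℝ)+d)) = 0 :=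
    (iSup_congr fun γ : Icc (0:ℝ) 1 => (hLg (γ:ℝ)).symm).trans (heq x hx)
  have hq0 : A*γ₀^2+b*γ₀+d = 0 := hsup.symm.trans hiSup_eq
  have hle : ∀ γ ∈ Icc (0:ℝ) 1, A*γ^2+b*γ+d ≤ 0 :=
    fun γ h => le_of_le_of_eq (hmax h) hq0
  -- positivity of M
  have hWx1 : 1 < W x := by
    have := hmono (self_mem_Ici) (mem_Ici.mpr hx0.le) hx0
    rwa [hW0] at this
  have hleft : Function.leftLim (⇑F) 0 = 0 := by
    apply le_antisymm
    · have := F.mono.leftLim_le (le_refl (0:ℝ))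
      rwa [hF0 0 le_rfl] at this
    · have := F.mono.le_leftLim (show (-1:ℝ) < 0 by norm_num)
      rwa [hF0 (-1) (by norm_num)] at this
  have hmeasIcc : F.measure (Icc 0 x) = ENNReal.ofReal (F x) := by
    rw [F.measure_Icc, hleft, sub_zero]
  have hmeasfin : F.measure (Icc 0 x) ≠ ⊤ := by
    rw [hmeasIcc]; exact ENNReal.ofReal_ne_top
  have hcontW : ContinuousOn (fun α => W (x - α)) (Icc 0 x) := by
    apply hcont.comp (Continuous.continuousOn (by continuity))
    intro α hα; exact mem_Ici.mpr (by linarith [hα.2])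
  have hInt : IntegrableOn (fun α => W (x - α)) (Icc 0 x) F.measure :=
    hcontW.integrableOn_Icc
  have hint_le : (∫ α in Icc (0:ℝ) x, W (x - α) ∂F.measure) ≤ F x * W x := by
    have h1 : (∫ α in Icc (0:ℝ) x, W (x - α) ∂F.measure)
        ≤ ∫ _ in Icc (0:ℝ) x, W x ∂F.measure := by
      apply setIntegral_mono_on hInt (integrableOn_const hmeasfin)
        measurableSet_Icc
      intro α hα
      rcases eq_or_lt_of_le (show x - α ≤ x by linarith [hα.1]) with h|h
      · rw [h]
      · exact (hmono (mem_Ici.mpr (by linarith [hα.2])) (mem_Ici.mpr hx0.le) h).le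
    rw [setIntegral_const, measureReal_def, hmeasIcc, ENNReal.toReal_ofReal (hF01 x).1] at h1
    simpa using h1
  have hMpos : 0 < M := by
    rw [hM_def]
    have hFx1 : F x ≤ 1 := (hF01 x).2
    have h1 : β * (∫ α in Icc (0:ℝ) x, W (x - α) ∂F.measure) ≤ β * (F x * W x) :=
      mul_le_mul_of_nonneg_left hint_le hβ.le
    have h2 : F x * W x ≤ 1 * W x :=
      mul_le_mul_of_nonneg_right hFx1 (by linarith)
    nlinarith [h1, h2]
  -- derivative facts
  have hdiffW : ∀ y ∈ Ioi (0:ℝ), HasDerivAt W (deriv W y) y := by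
    intro y hy
    exact ((hC2.differentiableOn (by norm_num) y hy).differentiableAt
      (isOpen_Ioi.mem_nhds hy)).hasDerivAt
  have hderiv_nonneg : ∀ y ∈ Ioi (0:ℝ), 0 ≤ deriv W y := by
    intro y hy
    have hy0 : (0:ℝ) < y := hy
    apply ge_of_tendsto (hasDerivAt_iff_tendsto_slope.1 (hdiffW y hy))
    filter_upwards [(eventually_gt_nhds hy0).filter_mono nhdsWithin_le_nhds,
      eventually_mem_nhdsWithin] with z hz hzne
    have hzne' : z ≠ y := hzne
    rw [slope_def_field]
    rcases lt_or_gt_of_ne hzne' with h|h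
    · rw [div_nonneg_iff]
      right
      exact ⟨sub_nonpos.2 ((hmono.monotoneOn (mem_Ici.mpr hz.le) (mem_Ici.mpr hy0.le) h.le)),
        by linarith⟩
    · apply div_nonneg
      · exact sub_nonneg.2 ((hmono.monotoneOn (mem_Ici.mpr hy0.le) (mem_Ici.mpr (by linarith)) h.le))
      · linarith
  have hbpos : 0 < deriv W x := by
    rcases (hderiv_nonneg x hx).lt_or_eq with h|h
    · exact h
    · exfalso
      have hb0 : deriv W x = 0 := h.symm
      have hApos : 0 < A := by
        have hd' : d = -M := by rw [hd_def, hb0]; ring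
        have hbγ : b * γ₀ = 0 := by rw [hb_def, hb0]; ring
        by_contra h'
        push_neg at h'
        have hAg : A * γ₀^2 ≤ 0 := mul_nonpos_iff.2 (Or.inr ⟨h', sq_nonneg γ₀⟩)
        linarith
      have hW2pos : 0 < deriv (deriv W) x := by
        have h2 : (0:ℝ) < σ^2 * x^2 / 2 := by positivity
        nlinarith [hA_def]
      have hC1 : ContDiffOn ℝ 1 (deriv W) (Ioi 0) :=
        hC2.deriv_of_isOpen isOpen_Ioi (by norm_num)
      have hd2 : HasDerivAt (deriv W) (deriv (deriv W) x) x :=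
        ((hC1.differentiableOn one_ne_zero x hx).differentiableAt
          (isOpen_Ioi.mem_nhds hx)).hasDerivAt
      have hslope : Tendsto (slope (deriv W) x) (𝓝[<] x) (𝓝 (deriv (deriv W) x)) :=
        (hasDerivAt_iff_tendsto_slope.1 hd2).mono_left
          (nhdsWithin_mono _ (fun y hy => ne_of_lt hy))
      have hev : ∀ᶠ y in 𝓝[<] x, 0 < slope (deriv W) x y :=
        hslope.eventually (eventually_gt_nhds hW2pos)
      obtain ⟨y, hy1, hy2, hy3⟩ := (hev.and
        (((eventually_gt_nhds hx0).filter_mono nhdsWithin_le_nhds).and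
          eventually_mem_nhdsWithin)).exists
      have hy3' : y < x := hy3
      rw [slope_def_field, hb0, sub_zero] at hy1
      have hnum : deriv W y < 0 := by
        have hyx : y - x ≠ 0 := by intro hc; rw [sub_eq_zero] at hc; exact absurd hc (ne_of_lt hy3')
        have := mul_neg_of_pos_of_neg hy1 (by linarith : y - x < 0)
        rwa [div_mul_cancel₀ _ hyx] at this
      exact absurd (hderiv_nonneg y hy2) (not_le.2 hnum)
  have hb' : 0 < b := by rw [hb_def]; exact mul_pos (mul_pos hr hx0) hbpos
  -- conclude via quad_key
  have key := quad_key A b d hb' hle ⟨γ₀, hγ₀, hq0⟩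
  have hvert : -(r * deriv W x) / (σ^2 * x * deriv (deriv W) x) = -b/(2*A) := by
    rw [hb_def, hA_def]
    have hx' : x ≠ 0 := ne_of_gt hx0
    calc -(r * deriv W x) / (σ^2 * x * deriv (deriv W) x)
        = (x * -(r * deriv W x)) / (x * (σ^2 * x * deriv (deriv W) x)) :=
          (mul_div_mul_left _ _ hx').symm
      _ = -(r * x * deriv W x)/(2*(σ^2 * x^2 * deriv (deriv W) x / 2)) := by
          congr 1 <;> ring
  rw [hvert, key]
  congr 1
  rw [hd_def, hb_def]
  ring

/-- (Proposition 6.2(a)): for the scale function `W` (the unique increasing `C²` solution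
of `L*(W)=0` on `(0,∞)` with `W 0 = 1`), the optimal investment fraction satisfies
`γ̃(W)(x) = min {1, 2(M(W)(x) - pW'(x)) / (rxW'(x))}` for every `x > 0`. -/
theorem gammaTilde_formula
    (p β c r σ : ℝ) (hp : 0 < p) (hβ : 0 < β) (hr : 0 < r) (hrc : r < c) (hσ : 0 < σ)
    (F : StieltjesFunction ℝ)
    (hF01 : ∀ x : ℝ, F x ∈ Icc (0 : ℝ) 1)
    (hF0 : ∀ x : ℝ, x ≤ 0 → F x = 0)
    (hF1 : Tendsto (⇑F) atTop (nhds 1))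
    (hFmean : IntegrableOn id (Ici (0 : ℝ)) F.measure)
    (hFd : ∃ f : ℝ → ℝ, Measurable f ∧ (∃ C : ℝ, ∀ t, |f t| ≤ C) ∧ (∀ t, 0 ≤ f t) ∧
      (∀ t : ℝ, t ≤ 0 → f t = 0) ∧ ∀ x : ℝ, F x = ∫ t in (0 : ℝ)..x, f t)
    (W : ℝ → ℝ) (hW : IsSolW p β c r σ F W) :
    ∀ x ∈ Ioi (0 : ℝ),
      gammaTilde r σ W x =
        min 1 (2 * (Mop β c F W x - p * deriv W x) / (r * x * deriv W x)) := by
  obtain ⟨hmono, hcont, hC2, hW0, heq⟩ := hW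
  intro x hx
  have heq' : ∀ x ∈ Ioi (0 : ℝ), (⨆ γ : Icc (0:ℝ) 1,
      (σ ^ 2 * ((γ:ℝ)) ^ 2 * x ^ 2 * deriv (deriv W) x / 2 + (p + r * (γ:ℝ) * x) * deriv W x
    - (c + β) * W x + β * ∫ α in Icc (0 : ℝ) x, W (x - α) ∂F.measure)) = 0 := by
    intro y hy
    have := heq y hy
    simpa only [Lstar, Lg] using this
  have := main_goal p β c r σ hp hβ hr hrc hσ F hF01 hF0 W hmono hcont hC2 hW0 heq' x hx
  simpa only [gammaTilde, Mop] using this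
end

section
/- Assume F has a bounded density and let W be the unique increasing twice continuously differentiable solution of L*(W)=0 on (0,∞) with W(0)=1. Then the infimum of W' over [0,∞) is attained and positive: there exists x ≥ 0 with W'(x) = inf_{y≥0} W'(y) > 0 (here W'(0) means the right derivative at 0). -/
open MeasureTheory Set Filter

open Topology Function

lemma quad_aux {a b k : ℝ} (hb : 0 ≤ b)
    (hle : ∀ γ ∈ Icc (0:ℝ) 1, a*γ^2 + b*γ + k ≤ 0)
    (heq : ∃ γ ∈ Icc (0:ℝ) 1, a*γ^2 + b*γ + k = 0) :
    0 ≤ b + k ∨ 0 ≤ a + b + k := by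
  obtain ⟨γ, ⟨hγ0, hγ1⟩, hq⟩ := heq
  by_contra hcon
  push_neg at hcon
  obtain ⟨h1, h2⟩ := hcon
  have hk : k ≤ 0 := by have := hle 0 ⟨le_rfl, zero_le_one⟩; nlinarith
  have hγpos : 0 < γ := by
    rcases hγ0.lt_or_eq with h | h
    · exact h
    · exfalso; rw [← h] at hq; nlinarith
  have hγlt : γ < 1 := by
    rcases hγ1.lt_or_eq with h | h
    · exact h
    · exfalso; rw [h] at hq; nlinarith
  set t := min γ (1 - γ) with ht_def
  have ht : 0 < t := lt_min hγpos (by linarith)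
  have ht1 : γ + t ≤ 1 := by
    have : t ≤ 1 - γ := min_le_right _ _
    linarith
  have ht2 : 0 ≤ γ - t := by
    have : t ≤ γ := min_le_left _ _
    linarith
  have h3 := hle (γ + t) ⟨by linarith, ht1⟩
  have h4 := hle (γ - t) ⟨ht2, by linarith⟩
  have ht2sq : 0 < t^2 := by positivity
  have ha : a ≤ 0 := by nlinarith [ht2sq]
  nlinarith [mul_nonneg hb (sub_nonneg.2 hγ1), mul_nonneg (neg_nonneg.2 ha) (sq_nonneg γ)]

lemma eventually_lt_left_of_hasDerivAt_pos {g : ℝ → ℝ} {x d : ℝ}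
    (hd : HasDerivAt g d x) (hpos : 0 < d) : ∀ᶠ y in 𝓝[<] x, g y < g x := by
  have hs := hasDerivAt_iff_tendsto_slope.1 hd
  have h1 : ∀ᶠ y in 𝓝[≠] x, 0 < slope g x y := hs.eventually (eventually_gt_nhds hpos)
  have hmono : 𝓝[<] x ≤ 𝓝[≠] x := nhdsWithin_mono _ (fun y hy => ne_of_lt hy)
  filter_upwards [h1.filter_mono hmono, self_mem_nhdsWithin] with y hy hyx
  have hxy : y - x < 0 := sub_neg.2 hyx
  rw [slope_def_field] at hy
  rcases div_pos_iff.1 hy with ⟨_, h⟩ | ⟨h, _⟩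
  · linarith
  · linarith

lemma eventually_gt_right_of_hasDerivAt_pos {g : ℝ → ℝ} {x d : ℝ}
    (hd : HasDerivAt g d x) (hpos : 0 < d) : ∀ᶠ y in 𝓝[>] x, g x < g y := by
  have hs := hasDerivAt_iff_tendsto_slope.1 hd
  have h1 : ∀ᶠ y in 𝓝[≠] x, 0 < slope g x y := hs.eventually (eventually_gt_nhds hpos)
  have hmono : 𝓝[>] x ≤ 𝓝[≠] x := nhdsWithin_mono _ (fun y hy => ne_of_gt hy)
  filter_upwards [h1.filter_mono hmono, self_mem_nhdsWithin] with y hy hyx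
  have hxy : 0 < y - x := sub_pos.2 hyx
  rw [slope_def_field] at hy
  rcases div_pos_iff.1 hy with ⟨h, _⟩ | ⟨_, h⟩
  · linarith
  · linarith


set_option maxHeartbeats 1000000 in
/-- **The infimum of `W'` is attained and positive** (Proposition 7.1): assume `F` has a
bounded density and let `W` be the unique increasing `C²` solution of `L*(W)=0` on
`(0,∞)` with `W 0 = 1` (differentiable from the right at `0`). Then there exists
`x ≥ 0` at which `W'` (the derivative within `[0,∞)`, i.e. the right derivative at `0`)
attains its infimum over `[0,∞)`, and this infimum is positive. -/
theorem deriv_scale_function_attains_min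
    (p β c r σ : ℝ) (hp : 0 < p) (hβ : 0 < β) (hr : 0 < r) (hrc : r < c) (hσ : 0 < σ)
    (F : StieltjesFunction ℝ)
    (hF01 : ∀ x : ℝ, F x ∈ Icc (0 : ℝ) 1)
    (hF0 : ∀ x : ℝ, x ≤ 0 → F x = 0)
    (hF1 : Tendsto (⇑F) atTop (nhds 1))
    (hFmean : IntegrableOn id (Ici (0 : ℝ)) F.measure)
    (hFd : ∃ f : ℝ → ℝ, Measurable f ∧ (∃ C : ℝ, ∀ t, |f t| ≤ C) ∧ (∀ t, 0 ≤ f t) ∧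
      (∀ t : ℝ, t ≤ 0 → f t = 0) ∧ ∀ x : ℝ, F x = ∫ t in (0 : ℝ)..x, f t)
    (W : ℝ → ℝ) (hW : IsSolW p β c r σ F W)
    (hW0 : DifferentiableWithinAt ℝ W (Ici 0) 0) :
    ∃ x ∈ Ici (0 : ℝ),
      (∀ y ∈ Ici (0 : ℝ), derivWithin W (Ici 0) x ≤ derivWithin W (Ici 0) y) ∧
      0 < derivWithin W (Ici 0) x := by
  obtain ⟨hWmono, hWc, hWC2, hW0eq, hLsol⟩ := hW
  obtain ⟨f, hfm, ⟨Cf, hfC⟩, hfnn, hfneg, hfint⟩ := hFd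
  set L : ℝ := (c + β) / p with hLdef
  have hLpos : 0 < L := div_pos (by linarith) hp
  set R : ℝ → ℝ := fun x => (c + β) * W x - β * ∫ α in Icc (0 : ℝ) x, W (x - α) ∂F.measure
    with hRdef
  clear_value L R
  -- basic facts about W
  have hWge1 : ∀ x ∈ Ici (0:ℝ), 1 ≤ W x := by
    intro x hx
    rcases (mem_Ici.1 hx).lt_or_eq with h | h
    · rw [← hW0eq]; exact (hWmono self_mem_Ici hx h).le
    · rw [← h, hW0eq]
  -- derivative infrastructure
  have hWdiff : DifferentiableOn ℝ W (Ioi 0) := hWC2.differentiableOn (by norm_num)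
  have hgd : ∀ x ∈ Ioi (0:ℝ), HasDerivAt W (deriv W x) x := fun x hx =>
    ((hWdiff x hx).differentiableAt (isOpen_Ioi.mem_nhds hx)).hasDerivAt
  have hgC1 : ContDiffOn ℝ 1 (deriv W) (Ioi 0) :=
    hWC2.deriv_of_isOpen isOpen_Ioi (by norm_num)
  have hgcont : ContinuousOn (deriv W) (Ioi 0) := hgC1.continuousOn
  have hgdiff : DifferentiableOn ℝ (deriv W) (Ioi 0) := hgC1.differentiableOn one_ne_zero
  have hg2 : ∀ x ∈ Ioi (0:ℝ), HasDerivAt (deriv W) (deriv (deriv W) x) x := fun x hx =>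
    ((hgdiff x hx).differentiableAt (isOpen_Ioi.mem_nhds hx)).hasDerivAt
  -- nonnegativity of deriv W
  have hgnonneg : ∀ x ∈ Ioi (0:ℝ), 0 ≤ deriv W x := by
    intro x hx
    have hslope := hasDerivAt_iff_tendsto_slope.1 (hgd x hx)
    have hmono : 𝓝[>] x ≤ 𝓝[≠] x := nhdsWithin_mono _ (fun y hy => ne_of_gt hy)
    refine ge_of_tendsto (hslope.mono_left hmono) ?_
    filter_upwards [self_mem_nhdsWithin] with y hy
    rw [slope_def_field]
    have hxy : x < y := hy
    have h0x : (0:ℝ) ≤ x := le_of_lt hx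
    have := hWmono (mem_Ici.2 h0x) (mem_Ici.2 (by linarith)) hxy
    have h2 : 0 < y - x := by linarith
    exact le_of_lt (div_pos (by linarith) h2)

  -- extraction from the supremum
  have hLfacts : ∀ x ∈ Ioi (0:ℝ), (∀ γ ∈ Icc (0:ℝ) 1, Lg p β c r σ F γ W W x ≤ 0) ∧
      (∃ γ ∈ Icc (0:ℝ) 1, Lg p β c r σ F γ W W x = 0) := by
    intro x hx
    have hL := hLsol x hx
    have hcont : Continuous (fun γ : ℝ => Lg p β c r σ F γ W W x) := by
      unfold Lg; fun_prop
    obtain ⟨γ₀, hγ₀mem, hmax⟩ :=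
      isCompact_Icc.exists_isMaxOn (nonempty_Icc.2 zero_le_one) hcont.continuousOn
    have hbdd : BddAbove (range fun γ : Icc (0:ℝ) 1 => Lg p β c r σ F (γ : ℝ) W W x) := by
      refine ⟨Lg p β c r σ F γ₀ W W x, ?_⟩
      rintro _ ⟨γ, rfl⟩
      exact hmax γ.2
    have hsup : Lstar p β c r σ F W W x = Lg p β c r σ F γ₀ W W x :=
      le_antisymm (ciSup_le fun γ => hmax γ.2) (le_ciSup hbdd ⟨γ₀, hγ₀mem⟩)
    constructor
    · intro γ hγ
      exact (le_ciSup hbdd ⟨γ, hγ⟩).trans_eq hL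
    · exact ⟨γ₀, hγ₀mem, hsup.symm.trans hL⟩
  -- integral bounds
  have hFleft : Function.leftLim (⇑F) 0 = 0 := by
    have hev : (⇑F) =ᶠ[𝓝[<] (0:ℝ)] (fun _ => (0:ℝ)) :=
      eventually_nhdsWithin_of_forall fun y hy => hF0 y (le_of_lt hy)
    exact leftLim_eq_of_tendsto
      ((tendsto_congr' hev).2 tendsto_const_nhds)
  have hIlb : ∀ x ∈ Ioi (0:ℝ), 0 ≤ ∫ α in Icc (0 : ℝ) x, W (x - α) ∂F.measure := by
    intro x hx
    refine setIntegral_nonneg measurableSet_Icc fun α hα => ?_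
    have : (1:ℝ) ≤ W (x - α) := hWge1 _ (mem_Ici.2 (by linarith [hα.1, hα.2]))
    linarith
  have hIub : ∀ x ∈ Ioi (0:ℝ),
      (∫ α in Icc (0 : ℝ) x, W (x - α) ∂F.measure) ≤ W x * F x := by
    intro x hx
    have hx0 : (0:ℝ) < x := hx
    have hcWsub : ContinuousOn (fun α => W (x - α)) (Icc 0 x) := by
      refine hWc.comp (continuousOn_const.sub continuousOn_id) fun α hα => ?_
      exact mem_Ici.2 (by linarith [hα.1, hα.2])
    have hIint : IntegrableOn (fun α => W (x - α)) (Icc 0 x) F.measure :=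
      hcWsub.integrableOn_compact isCompact_Icc
    have hconst : IntegrableOn (fun _ => W x) (Icc 0 x) F.measure := by
      refine (integrableOn_const_iff (by finiteness)).2 (Or.inr ?_)
      exact measure_Icc_lt_top
    have hle : (∫ α in Icc (0 : ℝ) x, W (x - α) ∂F.measure) ≤
        ∫ _ in Icc (0 : ℝ) x, W x ∂F.measure := by
      refine setIntegral_mono_on hIint hconst measurableSet_Icc fun α hα => ?_
      exact hWmono.monotoneOn (mem_Ici.2 (by linarith [hα.1, hα.2]))
        (mem_Ici.2 hx0.le) (by linarith [hα.1])
    have hmeas : F.measure (Icc 0 x) = ENNReal.ofReal (F x) := by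
      rw [F.measure_Icc, hFleft, sub_zero]
    rw [setIntegral_const, measureReal_def, hmeas, ENNReal.toReal_ofReal (hF01 x).1, smul_eq_mul,
      mul_comm] at hle
    exact hle
  have hRge : ∀ x ∈ Ioi (0:ℝ), c * W x ≤ R x := by
    intro x hx
    have h1 := hIub x hx
    have h2 : F x ≤ 1 := (hF01 x).2
    have h3 : (1:ℝ) ≤ W x := hWge1 x (mem_Ici.2 (le_of_lt hx))
    have h4 : W x * F x ≤ W x := by nlinarith
    simp only [hRdef]
    nlinarith [hβ.le]
  have hRc : ∀ x ∈ Ioi (0:ℝ), c ≤ R x := by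
    intro x hx
    have := hRge x hx
    have h3 : (1:ℝ) ≤ W x := hWge1 x (mem_Ici.2 (le_of_lt hx))
    nlinarith
  have hRub : ∀ x ∈ Ioi (0:ℝ), R x ≤ (c + β) * W x := by
    intro x hx
    have := hIlb x hx
    simp only [hRdef]
    nlinarith
  -- dichotomy
  have hdich : ∀ x ∈ Ioi (0:ℝ), R x ≤ (p + r*x) * deriv W x ∨
      R x ≤ σ^2*x^2*(deriv (deriv W) x)/2 + (p + r*x)*deriv W x := by
    intro x hx
    obtain ⟨hle, heq⟩ := hLfacts x hx
    have hkey : ∀ γ : ℝ, Lg p β c r σ F γ W W x =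
        (σ^2*x^2*(deriv (deriv W) x)/2)*γ^2 + (r*x*deriv W x)*γ + (p*deriv W x - R x) := by
      intro γ
      simp only [Lg, hRdef]
      ring
    have hb : 0 ≤ r*x*deriv W x :=
      mul_nonneg (mul_nonneg hr.le (le_of_lt hx)) (hgnonneg x hx)
    have hle' : ∀ γ ∈ Icc (0:ℝ) 1,
        (σ^2*x^2*(deriv (deriv W) x)/2)*γ^2 + (r*x*deriv W x)*γ + (p*deriv W x - R x) ≤ 0 :=
      fun γ hγ => (hkey γ) ▸ hle γ hγ
    have heq' : ∃ γ ∈ Icc (0:ℝ) 1,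
        (σ^2*x^2*(deriv (deriv W) x)/2)*γ^2 + (r*x*deriv W x)*γ + (p*deriv W x - R x) = 0 := by
      obtain ⟨γ, hγ, h⟩ := heq
      exact ⟨γ, hγ, (hkey γ) ▸ h⟩
    rcases quad_aux hb hle' heq' with h | h
    · left; linarith
    · right; linarith
  -- the gamma = 0 inequality
  have hg0ub : ∀ x ∈ Ioi (0:ℝ), p * deriv W x ≤ R x := by
    intro x hx
    have := (hLfacts x hx).1 0 ⟨le_rfl, zero_le_one⟩
    simp only [Lg, hRdef] at this ⊢
    nlinarith [this]

  -- positivity of deriv W on (0, ∞)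
  have hgpos : ∀ x ∈ Ioi (0:ℝ), 0 < deriv W x := by
    intro x hx
    have hx' : (0:ℝ) < x := hx
    rcases (hgnonneg x hx).lt_or_eq with h | h
    · exact h
    exfalso
    have hs2 : 0 < σ^2 * x^2 := mul_pos (pow_pos hσ 2) (pow_pos hx' 2)
    rcases hdich x hx with h1 | h2
    · have := hRc x hx
      rw [← h] at h1
      nlinarith
    · have hW2pos : 0 < deriv (deriv W) x := by
        by_contra hW2
        push_neg at hW2
        have h3 : σ^2 * x^2 * (deriv (deriv W) x) ≤ 0 :=
          mul_nonpos_of_nonneg_of_nonpos hs2.le hW2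
        have := hRc x hx
        rw [← h] at h2
        linarith
      have hev := eventually_lt_left_of_hasDerivAt_pos (hg2 x hx) hW2pos
      have hmem : Ioo (0:ℝ) x ∈ 𝓝[<] x := Ioo_mem_nhdsLT_of_mem ⟨hx, le_rfl⟩
      obtain ⟨y, hy1, hy2⟩ := (hev.and (eventually_mem_set.2 hmem)).exists
      have := hgnonneg y hy2.1
      rw [← h] at hy1
      linarith
  -- the barrier lemma
  have hbarrier : ∀ θ K ε₀ : ℝ, 0 < K → 0 < ε₀ →
      (∀ t ∈ Ioc (0:ℝ) ε₀, deriv W t < θ → K ≤ R t - (p + r*t) * deriv W t) →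
      ∀ x ∈ Ioc (0:ℝ) ε₀, θ ≤ deriv W x := by
    intro θ K ε₀ hK hε₀ H xb hxbmem
    by_contra hlt
    push_neg at hlt
    have hxb0 : (0:ℝ) < xb := hxbmem.1
    have hW2low : ∀ t ∈ Ioc (0:ℝ) ε₀, deriv W t < θ →
        2*K ≤ (deriv (deriv W) t) * (σ^2 * t^2) := by
      intro t ht hlt'
      have hKle := H t ht hlt'
      rcases hdich t ht.1 with h1 | h2
      · linarith
      · have h3 : K ≤ σ^2*t^2*(deriv (deriv W) t)/2 := by linarith
        nlinarith [h3]
    have hW2pos' : ∀ t ∈ Ioc (0:ℝ) ε₀, deriv W t < θ → 0 < deriv (deriv W) t := by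
      intro t ht hlt'
      have h4 := hW2low t ht hlt'
      have hs2 : 0 < σ^2 * t^2 := mul_pos (pow_pos hσ 2) (pow_pos ht.1 2)
      by_contra hW2
      push_neg at hW2
      have h3 : (deriv (deriv W) t) * (σ^2 * t^2) ≤ 0 :=
        mul_nonpos_of_nonpos_of_nonneg hW2 hs2.le
      linarith
    -- step 1: deriv W < θ on all of (0, xb]
    have hall : ∀ t ∈ Ioc (0:ℝ) xb, deriv W t < θ := by
      by_contra hS
      push_neg at hS
      obtain ⟨s₀, hs₀mem, hs₀⟩ := hS
      set S := Icc s₀ xb ∩ (deriv W) ⁻¹' (Ici θ) with hSdef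
      have hs₀pos : 0 < s₀ := hs₀mem.1
      have hSne : S.Nonempty := ⟨s₀, ⟨le_rfl, hs₀mem.2⟩, hs₀⟩
      have hSbdd : BddAbove S := ⟨xb, fun t ht => ht.1.2⟩
      have hSclosed : IsClosed S := by
        refine (hgcont.mono fun t ht => ?_).preimage_isClosed_of_isClosed isClosed_Icc isClosed_Ici
        exact lt_of_lt_of_le hs₀pos ht.1
      have htpS := hSclosed.csSup_mem hSne hSbdd
      set tp := sSup S with htpdef
      clear_value tp
      obtain ⟨⟨htp1, htp2⟩, htp3⟩ := htpS
      have htp3' : θ ≤ deriv W tp := htp3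
      have htppos : 0 < tp := lt_of_lt_of_le hs₀pos htp1
      have htplt : tp < xb := lt_of_le_of_ne htp2 (fun heq => by rw [heq] at htp3'; linarith)
      have hgt : ∀ t ∈ Ioc tp xb, deriv W t < θ := by
        intro t ht
        by_contra h'
        push_neg at h'
        have : t ∈ S := ⟨⟨le_trans htp1 ht.1.le, ht.2⟩, h'⟩
        exact absurd ((le_csSup hSbdd this).trans_eq htpdef.symm) (not_le.2 ht.1)
      have hW2pos : ∀ t ∈ Ioo tp xb, 0 < deriv (deriv W) t := by
        intro t ht
        exact hW2pos' t ⟨lt_trans htppos ht.1, le_trans ht.2.le hxbmem.2⟩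
          (hgt t ⟨ht.1, ht.2.le⟩)
      have hsm : StrictMonoOn (deriv W) (Icc tp xb) := by
        refine strictMonoOn_of_deriv_pos (convex_Icc _ _)
          (hgcont.mono fun t ht => lt_of_lt_of_le htppos ht.1) ?_
        rw [interior_Icc]
        exact hW2pos
      have := hsm (left_mem_Icc.2 htplt.le) (right_mem_Icc.2 htplt.le) htplt
      linarith
    -- step 2: monotonicity of deriv W + c'/t on subintervals
    set c' : ℝ := 2*K/σ^2 with hc'def
    have hc'pos : 0 < c' := by positivity
    have hmono : ∀ s ∈ Ioo (0:ℝ) xb, deriv W s + c'/s ≤ deriv W xb + c'/xb := by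
      intro s hs
      have hs0 : 0 < s := hs.1
      have hφmono : MonotoneOn (fun t => deriv W t + c'/t) (Icc s xb) := by
        refine monotoneOn_of_deriv_nonneg (convex_Icc _ _) ?_ ?_ ?_
        · refine ContinuousOn.add (hgcont.mono fun t ht => lt_of_lt_of_le hs0 ht.1) ?_
          exact continuousOn_const.div continuousOn_id
            (fun t ht => ne_of_gt (lt_of_lt_of_le hs0 ht.1))
        · rw [interior_Icc]
          intro t ht
          have ht0 : 0 < t := lt_of_lt_of_le hs0 ht.1.le
          refine DifferentiableAt.differentiableWithinAt (DifferentiableAt.add ?_ ?_)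
          · exact (hgdiff t ht0).differentiableAt (isOpen_Ioi.mem_nhds ht0)
          · exact (differentiableAt_const _).div differentiableAt_id (ne_of_gt ht0)
        · rw [interior_Icc]
          intro t ht
          have ht0 : 0 < t := lt_of_lt_of_le hs0 ht.1.le
          have hder : HasDerivAt (fun t => deriv W t + c'/t)
              (deriv (deriv W) t + (-(c'/t^2))) t := by
            have h1 : HasDerivAt (fun y : ℝ => c'/y) (-(c'/t^2)) t := by
              have h2 := (hasDerivAt_inv (ne_of_gt ht0)).const_mul c'
              simp only [div_eq_mul_inv]
              refine h2.congr_deriv ?_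
              ring
            exact (hg2 t ht0).add h1
          rw [hder.deriv]
          have hlow := hW2low t ⟨ht0, le_trans ht.2.le hxbmem.2⟩
            (hall t ⟨ht0, ht.2.le⟩)
          have hs2 : 0 < σ^2 * t^2 := mul_pos (pow_pos hσ 2) (pow_pos ht0 2)
          have h5 : c'/t^2 ≤ deriv (deriv W) t := by
            rw [hc'def, div_div, div_le_iff₀ (by positivity)]
            nlinarith
          linarith
      exact hφmono (left_mem_Icc.2 hs.2.le) (right_mem_Icc.2 hs.2.le) hs.2.le
    -- step 3: contradiction by choosing s small
    have hgxb0 : 0 ≤ deriv W xb := hgnonneg xb hxb0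
    set B : ℝ := deriv W xb + c'/xb with hBdef
    have hBpos : 0 < B := by positivity
    set s : ℝ := min (xb/2) (c'/(B+1)) with hsdef
    have hspos : 0 < s := lt_min (by linarith) (by positivity)
    have hsxb : s < xb := lt_of_le_of_lt (min_le_left _ _) (by linarith)
    have hs2 : s ≤ c'/(B+1) := min_le_right _ _
    have hclt : B + 1 ≤ c'/s := by
      rw [le_div_iff₀ hspos]
      calc (B+1)*s ≤ (B+1)*(c'/(B+1)) := mul_le_mul_of_nonneg_left hs2 (by linarith)
        _ = c' := by field_simp
    have h6 := hmono s ⟨hspos, hsxb⟩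
    have h7 := hgnonneg s hspos
    linarith

  -- limit of R at 0+
  have hWtend : Tendsto W (𝓝[>] (0:ℝ)) (𝓝 1) := by
    have h1 : ContinuousWithinAt W (Ici 0) 0 := hWc 0 self_mem_Ici
    have h2 := h1.tendsto
    rw [hW0eq] at h2
    exact h2.mono_left (nhdsWithin_mono _ Ioi_subset_Ici_self)
  have hFtend : Tendsto (fun x => (F x : ℝ)) (𝓝[>] (0:ℝ)) (𝓝 0) := by
    have hub : ∀ x : ℝ, F x ≤ Cf * |x| := by
      intro x
      have h1 : ‖∫ t in (0:ℝ)..x, f t‖ ≤ Cf * |x - 0| :=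
        intervalIntegral.norm_integral_le_of_norm_le_const
          fun t _ => by rw [Real.norm_eq_abs]; exact hfC t
      rw [Real.norm_eq_abs, sub_zero] at h1
      rw [hfint x]
      exact (le_abs_self _).trans h1
    have htend : Tendsto (fun x : ℝ => Cf * |x|) (𝓝[>] (0:ℝ)) (𝓝 0) := by
      have : Tendsto (fun x : ℝ => Cf * |x|) (𝓝 (0:ℝ)) (𝓝 (Cf * |0|)) := by
        exact (continuous_const.mul continuous_abs).tendsto 0
      simp only [abs_zero, mul_zero] at this
      exact this.mono_left nhdsWithin_le_nhds
    refine tendsto_of_tendsto_of_tendsto_of_le_of_le' tendsto_const_nhds htend ?_ ?_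
    · exact Eventually.of_forall fun x => (hF01 x).1
    · exact Eventually.of_forall fun x => hub x
  have hItend : Tendsto (fun x => ∫ α in Icc (0 : ℝ) x, W (x - α) ∂F.measure)
      (𝓝[>] (0:ℝ)) (𝓝 0) := by
    have hub : Tendsto (fun x => W x * F x) (𝓝[>] (0:ℝ)) (𝓝 0) := by
      have := hWtend.mul hFtend
      rwa [mul_zero] at this
    refine tendsto_of_tendsto_of_tendsto_of_le_of_le' tendsto_const_nhds hub ?_ ?_
    · exact eventually_nhdsWithin_of_forall fun x hx => hIlb x hx
    · exact eventually_nhdsWithin_of_forall fun x hx => hIub x hx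
  have hRtend : Tendsto R (𝓝[>] (0:ℝ)) (𝓝 (c + β)) := by
    have h1 : Tendsto (fun x => (c + β) * W x -
        β * ∫ α in Icc (0 : ℝ) x, W (x - α) ∂F.measure) (𝓝[>] (0:ℝ))
        (𝓝 ((c + β) * 1 - β * 0)) :=
      (tendsto_const_nhds.mul hWtend).sub (tendsto_const_nhds.mul hItend)
    rw [mul_one, mul_zero, sub_zero] at h1
    exact Tendsto.congr (fun x => (congrFun hRdef x).symm) h1
  -- limit of deriv W at 0+ is L = (c+β)/p
  have hgtend : Tendsto (deriv W) (𝓝[>] (0:ℝ)) (𝓝 L) := by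
    rw [tendsto_order]
    constructor
    · -- lower bound via the barrier
      intro a ha
      obtain ⟨θ, hθdef⟩ : ∃ θ : ℝ, θ = max ((L + a)/2) (L/2) := ⟨_, rfl⟩
      have hθpos : 0 < θ := by
        rw [hθdef]; exact lt_of_lt_of_le (by linarith) (le_max_right _ _)
      have hθa : a < θ := by
        rw [hθdef]
        exact lt_of_lt_of_le (by linarith) (le_max_left _ _)
      have hθL : θ < L := by
        rw [hθdef]; exact max_lt (by linarith) (by linarith)
      obtain ⟨K, hKdef⟩ : ∃ K : ℝ, K = p * (L - θ) / 2 := ⟨_, rfl⟩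
      have hKpos : 0 < K := by
        rw [hKdef]
        have := sub_pos.2 hθL
        positivity
      -- eventually R t ≥ (c+β) - K/2 and r*t*θ ≤ K/2
      have hev1 : ∀ᶠ t in 𝓝[>] (0:ℝ), (c + β) - K/2 ≤ R t :=
        hRtend.eventually (eventually_ge_nhds (by linarith))
      have hev2 : ∀ᶠ t in 𝓝[>] (0:ℝ), r * t * θ ≤ K/2 := by
        have htt : Tendsto (fun t : ℝ => r * t * θ) (𝓝[>] (0:ℝ)) (𝓝 0) := by
          have : Tendsto (fun t : ℝ => r * t * θ) (𝓝 (0:ℝ)) (𝓝 (r * 0 * θ)) :=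
            ((continuous_const.mul continuous_id).mul continuous_const).tendsto 0
          rw [mul_zero, zero_mul] at this
          exact this.mono_left nhdsWithin_le_nhds
        exact htt.eventually (eventually_le_nhds (by linarith))
      obtain ⟨ε₀, hε₀pos, hε₀sub⟩ :=
        mem_nhdsGT_iff_exists_Ioc_subset.1 ((hev1.and hev2).filter_mono le_rfl)
      have hH : ∀ t ∈ Ioc (0:ℝ) ε₀, deriv W t < θ → K ≤ R t - (p + r*t) * deriv W t := by
        intro t ht hlt'
        obtain ⟨h1, h2⟩ := hε₀sub ht
        have hcb : (c + β) = p * L := by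
          rw [hLdef]; field_simp
        have hgle : deriv W t ≤ θ := hlt'.le
        have h3 : (p + r*t) * deriv W t ≤ (p + r*t) * θ := by
          have hpos : 0 ≤ p + r*t := by nlinarith [ht.1.le]
          exact mul_le_mul_of_nonneg_left hgle hpos
        have h4 : (p + r*t) * θ = p * θ + r*t*θ := by ring
        nlinarith
      have hbar := hbarrier θ K ε₀ hKpos hε₀pos hH
      filter_upwards [mem_nhdsGT_iff_exists_Ioc_subset.2
        ⟨ε₀, hε₀pos, fun t ht => ht⟩] with t ht
      exact lt_of_lt_of_le hθa (hbar t ht)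
    · -- upper bound from gamma = 0
      intro a ha
      have hev1 : ∀ᶠ t in 𝓝[>] (0:ℝ), R t < p * a := by
        refine hRtend.eventually (eventually_lt_nhds ?_)
        have h5 : (c + β)/p < a := by rw [← hLdef]; exact ha
        have h6 : c + β < a * p := (div_lt_iff₀ hp).1 h5
        linarith
      filter_upwards [hev1, self_mem_nhdsWithin] with t ht ht2
      have := hg0ub t ht2
      have hpg : p * deriv W t < p * a := lt_of_le_of_lt this ht
      exact lt_of_mul_lt_mul_left hpg hp.le

  -- value of the one-sided derivative at 0
  have hIciD : Ici (0:ℝ) \ {0} = Ioi 0 := by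
    ext y
    simp only [mem_diff, mem_Ici, mem_singleton_iff, mem_Ioi]
    constructor
    · rintro ⟨h1, h2⟩; exact lt_of_le_of_ne h1 (Ne.symm h2)
    · intro h; exact ⟨h.le, ne_of_gt h⟩
  have hslope1 : Tendsto (slope W 0) (𝓝[>] (0:ℝ)) (𝓝 (derivWithin W (Ici 0) 0)) := by
    have := hasDerivWithinAt_iff_tendsto_slope.1 hW0.hasDerivWithinAt
    rwa [hIciD] at this
  have hslope2 : Tendsto (slope W 0) (𝓝[>] (0:ℝ)) (𝓝 L) := by
    rw [Metric.tendsto_nhdsWithin_nhds]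
    intro ε hε
    obtain ⟨δ, hδpos, hδ⟩ := Metric.tendsto_nhdsWithin_nhds.1 hgtend ε hε
    refine ⟨δ, hδpos, ?_⟩
    intro h hh hdist
    have hh0 : 0 < h := hh
    obtain ⟨ξ, hξmem, hξeq⟩ := exists_hasDerivAt_eq_slope W (deriv W) hh0
      (hWc.mono (fun t ht => mem_Ici.2 (le_trans (le_refl 0) ht.1)))
      (fun t ht => hgd t ht.1)
    have hξIoi : ξ ∈ Ioi (0:ℝ) := hξmem.1
    have hξdist : dist ξ 0 < δ := by
      rw [Real.dist_eq, sub_zero] at hdist ⊢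
      rw [abs_of_pos hξmem.1, abs_of_pos hh0] at *
      linarith [hξmem.2]
    have := hδ hξIoi hξdist
    rw [slope_def_field, ← hξeq]
    exact this
  have hg0 : derivWithin W (Ici 0) 0 = L := tendsto_nhds_unique hslope1 hslope2
  -- derivWithin equals deriv on the interior
  have hgfull : ∀ x ∈ Ioi (0:ℝ), derivWithin W (Ici 0) x = deriv W x := fun x hx =>
    derivWithin_of_mem_nhds (Ici_mem_nhds hx)

  -- continuity of derivWithin W (Ici 0) on [0, x₁]
  have hcw0 : ContinuousWithinAt (derivWithin W (Ici 0)) (Ici 0) 0 := by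
    have hIci : Ici (0:ℝ) = insert 0 (Ioi 0) := by
      ext y
      simp only [mem_Ici, mem_insert_iff, mem_Ioi]
      constructor
      · intro h
        rcases h.lt_or_eq with h' | h'
        · exact Or.inr h'
        · exact Or.inl h'.symm
      · rintro (rfl | h)
        · exact le_rfl
        · exact h.le
    have hfilter : 𝓝[Ici (0:ℝ)] 0 = pure 0 ⊔ 𝓝[Ioi 0] 0 := by
      rw [hIci, nhdsWithin_insert]
    unfold ContinuousWithinAt
    rw [hfilter, tendsto_sup]
    constructor
    · exact tendsto_pure_nhds _ _
    · have hcongr : deriv W =ᶠ[𝓝[>] (0:ℝ)] (derivWithin W (Ici 0)) :=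
        eventually_nhdsWithin_of_forall fun y hy => (hgfull y hy).symm
      rw [hg0]
      exact hgtend.congr' hcongr
  -- the interval endpoint x₁
  obtain ⟨x₁, hx₁def⟩ : ∃ x₁ : ℝ, x₁ = 1 + (p + c)/(c - r) := ⟨_, rfl⟩
  have hcrpos : 0 < c - r := by linarith
  have hx₁gt1 : 1 < x₁ := by
    rw [hx₁def]
    have : 0 < (p + c)/(c - r) := div_pos (by linarith) hcrpos
    linarith
  have hx₁pos : 0 < x₁ := by linarith
  have hx₁key : p + c ≤ (c - r) * x₁ := by
    rw [hx₁def, mul_add, mul_one, mul_div_cancel₀ _ (ne_of_gt hcrpos)]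
    linarith
  have hcont01 : ContinuousOn (derivWithin W (Ici 0)) (Icc 0 x₁) := by
    intro y hy
    rcases hy.1.lt_or_eq with h | h
    · -- y > 0 : continuity of deriv W
      have hy0 : y ∈ Ioi (0:ℝ) := h
      have hca : ContinuousAt (deriv W) y := (hgcont y hy0).continuousAt
        (isOpen_Ioi.mem_nhds hy0)
      have hcongr : deriv W =ᶠ[𝓝 y] derivWithin W (Ici 0) :=
        (isOpen_Ioi.eventually_mem hy0).mono fun z hz => (hgfull z hz).symm
      exact (hca.congr hcongr).continuousWithinAt
    · rw [← h]
      exact hcw0.mono (fun z hz => hz.1)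
  obtain ⟨xm, hxmmem, hxmmin⟩ := isCompact_Icc.exists_isMinOn
    (nonempty_Icc.2 hx₁pos.le) hcont01
  have hxmmin' : ∀ y ∈ Icc (0:ℝ) x₁, derivWithin W (Ici 0) xm ≤ derivWithin W (Ici 0) y :=
    fun y hy => hxmmin hy
  -- the minimum of deriv W on [1, x₁]
  obtain ⟨z, hzmem, hzmin⟩ := isCompact_Icc.exists_isMinOn
    (nonempty_Icc.2 hx₁gt1.le)
    (hgcont.mono (fun t (ht : t ∈ Icc (1:ℝ) x₁) => lt_of_lt_of_le one_pos ht.1))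
  have hzmin' : ∀ y ∈ Icc (1:ℝ) x₁, deriv W z ≤ deriv W y := fun y hy => hzmin hy
  obtain ⟨m₁, hm₁def⟩ : ∃ m₁ : ℝ, m₁ = deriv W z := ⟨_, rfl⟩
  have hzpos : (0:ℝ) < z := lt_of_lt_of_le one_pos hzmem.1
  have hm₁pos : 0 < m₁ := hm₁def ▸ hgpos z hzpos
  -- tail bound: deriv W ≥ m₁ on [1, ∞)
  have htail : ∀ y ∈ Ici (1:ℝ), m₁ ≤ deriv W y := by
    by_contra hS
    push_neg at hS
    obtain ⟨y₀, hy₀mem, hy₀⟩ := hS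
    set S := {t : ℝ | 1 ≤ t ∧ deriv W t < m₁} with hSdef
    have hSne : S.Nonempty := ⟨y₀, hy₀mem, hy₀⟩
    have hSbdd : BddBelow S := ⟨1, fun t ht => ht.1⟩
    have hSx₁ : ∀ t ∈ S, x₁ < t := by
      intro t ht
      by_contra h'
      push_neg at h'
      have := hzmin' t ⟨ht.1, h'⟩
      rw [← hm₁def] at this
      linarith [ht.2]
    have hx₂lb : x₁ ≤ sInf S := le_csInf hSne fun t ht => (hSx₁ t ht).le
    obtain ⟨x₂, hx₂def⟩ : ∃ x₂ : ℝ, x₂ = sInf S := ⟨_, rfl⟩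
    rw [← hx₂def] at hx₂lb
    have hx₂pos : 0 < x₂ := lt_of_lt_of_le hx₁pos hx₂lb
    have hx₂gt1 : 1 < x₂ := lt_of_lt_of_le hx₁gt1 hx₂lb
    -- g x₂ ≤ m₁ via closure
    have hx₂ub : deriv W x₂ ≤ m₁ := by
      have hcl : x₂ ∈ closure S := hx₂def ▸ csInf_mem_closure hSne hSbdd
      have hCclosed : IsClosed (Ici x₁ ∩ deriv W ⁻¹' (Iic m₁)) := by
        refine (hgcont.mono fun t ht => lt_of_lt_of_le hx₁pos ht).preimage_isClosed_of_isClosed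
          isClosed_Ici isClosed_Iic
      have hsub : S ⊆ Ici x₁ ∩ deriv W ⁻¹' (Iic m₁) :=
        fun t ht => ⟨(hSx₁ t ht).le, ht.2.le⟩
      have := (closure_minimal hsub hCclosed) hcl
      exact this.2
    -- g ≥ m₁ on [1, x₂)
    have hlow : ∀ t ∈ Ico (1:ℝ) x₂, m₁ ≤ deriv W t := by
      intro t ht
      by_contra h'
      push_neg at h'
      have htS : t ∈ S := ⟨ht.1, h'⟩
      have := csInf_le hSbdd htS
      rw [← hx₂def] at this
      linarith [ht.2]
    -- g x₂ ≥ m₁ via left closure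
    have hx₂lb2 : m₁ ≤ deriv W x₂ := by
      have hcl : x₂ ∈ closure (Ico 1 x₂) := by
        rw [closure_Ico (ne_of_lt hx₂gt1)]
        exact ⟨hx₂gt1.le, le_rfl⟩
      have hCclosed : IsClosed (Icc (1:ℝ) x₂ ∩ deriv W ⁻¹' (Ici m₁)) :=
        (hgcont.mono fun t ht => lt_of_lt_of_le one_pos ht.1).preimage_isClosed_of_isClosed
          isClosed_Icc isClosed_Ici
      have hsub : Ico (1:ℝ) x₂ ⊆ Icc (1:ℝ) x₂ ∩ deriv W ⁻¹' (Ici m₁) :=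
        fun t ht => ⟨⟨ht.1, ht.2.le⟩, hlow t ht⟩
      exact ((closure_minimal hsub hCclosed) hcl).2
    have hgx₂ : deriv W x₂ = m₁ := le_antisymm hx₂ub hx₂lb2
    -- W x₂ ≥ 1 + m₁ (x₂ - 1)
    have hWlb : 1 + m₁ * (x₂ - 1) ≤ W x₂ := by
      have hψ : MonotoneOn (fun t => W t - m₁ * t) (Icc 1 x₂) := by
        refine monotoneOn_of_deriv_nonneg (convex_Icc _ _) ?_ ?_ ?_
        · exact ContinuousOn.sub
            (hWc.mono fun t ht => le_trans zero_le_one ht.1)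
            (continuousOn_const.mul continuousOn_id)
        · rw [interior_Icc]
          intro t ht
          have ht0 : 0 < t := lt_of_lt_of_le one_pos ht.1.le
          exact (((hWdiff t ht0).differentiableAt (isOpen_Ioi.mem_nhds ht0)).sub
            ((differentiableAt_const _).mul differentiableAt_id)).differentiableWithinAt
        · rw [interior_Icc]
          intro t ht
          have ht0 : 0 < t := lt_of_lt_of_le one_pos ht.1.le
          have hder : HasDerivAt (fun t => W t - m₁ * t) (deriv W t - m₁ * 1) t :=
            (hgd t ht0).sub ((hasDerivAt_id t).const_mul m₁)
          rw [hder.deriv, mul_one, sub_nonneg]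
          exact hlow t ⟨ht.1.le, ht.2⟩
      have h1 := hψ (left_mem_Icc.2 hx₂gt1.le) (right_mem_Icc.2 hx₂gt1.le) hx₂gt1.le
      have h2 : (1:ℝ) ≤ W 1 := hWge1 1 (by norm_num)
      simp only at h1
      nlinarith
    -- dichotomy at x₂ leads to contradiction
    rcases hdich x₂ hx₂pos with h1 | h2
    · rw [hgx₂] at h1
      have h3 := hRge x₂ hx₂pos
      have h4 : (c - r) * x₁ ≤ (c - r) * x₂ := mul_le_mul_of_nonneg_left hx₂lb hcrpos.le
      nlinarith
    · have hW2pos : 0 < deriv (deriv W) x₂ := by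
        rw [hgx₂] at h2
        have h3 := hRge x₂ hx₂pos
        have h4 : (c - r) * x₁ ≤ (c - r) * x₂ := mul_le_mul_of_nonneg_left hx₂lb hcrpos.le
        have h5 : (p + r * x₂) * m₁ < R x₂ := by nlinarith
        have hs2 : 0 < σ^2 * x₂^2 := mul_pos (pow_pos hσ 2) (pow_pos hx₂pos 2)
        by_contra hW2
        push_neg at hW2
        have h6 : σ^2 * x₂^2 * (deriv (deriv W) x₂) ≤ 0 :=
          mul_nonpos_of_nonneg_of_nonpos hs2.le hW2
        linarith
      have hev := eventually_gt_right_of_hasDerivAt_pos (hg2 x₂ hx₂pos) hW2pos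
      obtain ⟨b, hbgt, hbsub⟩ := mem_nhdsGT_iff_exists_Ioo_subset.1 hev
      -- there is a point of S in (x₂, b)
      have hx₂b : ∃ t ∈ S, t < b := by
        by_contra h'
        push_neg at h'
        have : b ≤ sInf S := le_csInf hSne h'
        rw [← hx₂def] at this
        exact absurd hbgt (not_lt.2 this)
      obtain ⟨t, htS, htb⟩ := hx₂b
      have htx₂ : x₂ < t := by
        have hle : sInf S ≤ t := csInf_le hSbdd htS
        rw [← hx₂def] at hle
        rcases hle.lt_or_eq with h' | h'
        · exact h'
        · exfalso
          rw [← h'] at htS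
          rw [hSdef] at htS
          have := htS.2
          rw [hgx₂] at this
          linarith
      have h7 : deriv W x₂ < deriv W t := hbsub ⟨htx₂, htb⟩
      rw [hgx₂] at h7
      have h8 : deriv W t < m₁ := htS.2
      linarith
  -- conclusion
  refine ⟨xm, hxmmem.1, ?_, ?_⟩
  · intro y hy
    rcases le_or_gt y x₁ with h | h
    · exact hxmmin' y ⟨hy, h⟩
    · have hy1 : y ∈ Ici (1:ℝ) := le_of_lt (lt_of_le_of_lt hx₁gt1.le h)
      have hy0 : y ∈ Ioi (0:ℝ) := lt_trans hx₁pos h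
      rw [hgfull y hy0]
      refine le_trans ?_ (htail y hy1)
      have hz01 : z ∈ Icc (0:ℝ) x₁ := ⟨le_trans zero_le_one hzmem.1, hzmem.2⟩
      have := hxmmin' z hz01
      rw [hgfull z hzpos] at this
      rw [← hm₁def] at this
      exact this
  · rcases hxmmem.1.lt_or_eq with h | h
    · have : xm ∈ Ioi (0:ℝ) := h
      rw [hgfull xm this]
      exact hgpos xm this
    · rw [← h, hg0]
      exact hLpos
end

section
/- Barrier value functions are supersolutions: assume F has a bounded density, let W be the unique increasing twice continuously differentiable solution of L*(W)=0 on (0,∞) with W(0)=1, and let x₀ ≥ p/(c−r) satisfy W'(x₀) ≤ W'(x) for all x ∈ (0,x₀]. Define U(x) = W(x)/W'(x₀) for 0 ≤ x ≤ x₀ and U(x) = W(x₀)/W'(x₀) + (x−x₀) for x > x₀. Then U is a viscosity supersolution of the HJB equation max{1−u'(x), L*(u)(x)}=0 at every x ∈ (0,∞). -/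
open MeasureTheory Set Filter
open Topology

/-- `u` is a viscosity supersolution of `max {1 - u'(x), L*(u)(x)} = 0` at `x ∈ (0,∞)`:
every `C²` test function `φ` such that `u - φ` attains its minimum over `(0,∞)` at `x`
satisfies `max {1 - φ'(x), sup_γ L_γ(u,φ)(x)} ≤ 0`. -/
def SupersolHJBAt (p β c r σ : ℝ) (F : StieltjesFunction ℝ) (u : ℝ → ℝ) (x : ℝ) : Prop :=
  ∀ φ : ℝ → ℝ, ContDiff ℝ 2 φ → (∀ y ∈ Ioi (0 : ℝ), u x - φ x ≤ u y - φ y) →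
    max (1 - deriv φ x) (Lstar p β c r σ F u φ x) ≤ 0

/-- `u` is a viscosity subsolution of `max {1 - u'(x), L*(u)(x)} = 0` at `x ∈ (0,∞)`:
every `C²` test function `ψ` such that `u - ψ` attains its maximum over `(0,∞)` at `x`
satisfies `max {1 - ψ'(x), sup_γ L_γ(u,ψ)(x)} ≥ 0`. -/
def SubsolHJBAt (p β c r σ : ℝ) (F : StieltjesFunction ℝ) (u : ℝ → ℝ) (x : ℝ) : Prop :=
  ∀ ψ : ℝ → ℝ, ContDiff ℝ 2 ψ → (∀ y ∈ Ioi (0 : ℝ), u y - ψ y ≤ u x - ψ x) →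
    0 ≤ max (1 - deriv ψ x) (Lstar p β c r σ F u ψ x)

section helpers

lemma deriv_nonneg_of_min_right {f : ℝ → ℝ} {D x b : ℝ} (hd : HasDerivAt f D x)
    (hb : x < b) (h : ∀ y ∈ Ioc x b, f x ≤ f y) : 0 ≤ D := by
  have hs : Tendsto (slope f x) (𝓝[>] x) (𝓝 D) :=
    (hasDerivAt_iff_tendsto_slope.mp hd).mono_left
      (nhdsWithin_mono x fun y hy => ne_of_gt hy)
  refine ge_of_tendsto hs ?_
  filter_upwards [Ioc_mem_nhdsGT hb, self_mem_nhdsWithin] with y hy (hy2 : x < y)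
  rw [slope_def_field]
  exact div_nonneg (sub_nonneg.2 (h y hy)) (sub_nonneg.2 hy2.le)

lemma deriv_nonpos_of_min_left {f : ℝ → ℝ} {D x a : ℝ} (hd : HasDerivAt f D x)
    (ha : a < x) (h : ∀ y ∈ Ico a x, f x ≤ f y) : D ≤ 0 := by
  have hs : Tendsto (slope f x) (𝓝[<] x) (𝓝 D) :=
    (hasDerivAt_iff_tendsto_slope.mp hd).mono_left
      (nhdsWithin_mono x fun y hy => ne_of_lt hy)
  refine le_of_tendsto hs ?_
  filter_upwards [Ico_mem_nhdsLT ha, self_mem_nhdsWithin] with y hy (hy2 : y < x)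
  rw [slope_def_field]
  exact div_nonpos_iff.2 (Or.inl ⟨sub_nonneg.2 (h y hy), sub_nonpos.2 hy2.le⟩)

lemma second_deriv_nonneg_of_min_left {g : ℝ → ℝ} {x δ D : ℝ} (hδ : 0 < δ)
    (hdiff : ∀ y ∈ Ioo (x - δ) (x + δ), DifferentiableAt ℝ g y)
    (hd2 : HasDerivAt (deriv g) D x) (hd1 : deriv g x = 0)
    (hmin : ∀ y ∈ Ioo (x - δ) x, g x ≤ g y) : 0 ≤ D := by
  by_contra hD
  push_neg at hD
  have hs : Tendsto (slope (deriv g) x) (𝓝[<] x) (𝓝 D) :=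
    (hasDerivAt_iff_tendsto_slope.mp hd2).mono_left
      (nhdsWithin_mono x fun y hy => ne_of_lt hy)
  have hev : ∀ᶠ y in 𝓝[<] x, slope (deriv g) x y < 0 := hs.eventually_lt_const hD
  obtain ⟨a, ha, haS⟩ := mem_nhdsLT_iff_exists_Ioo_subset.1 hev
  have ha' : (a : ℝ) < x := ha
  set m : ℝ := max a (x - δ) with hm_def
  have hmx : m < x := max_lt ha' (by linarith)
  set m' : ℝ := (m + x)/2 with hm'_def
  have hmm' : m < m' := by simp only [hm'_def]; linarith
  have hm'x : m' < x := by simp only [hm'_def]; linarith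
  have hm'δ : x - δ < m' := lt_of_le_of_lt (le_max_right _ _) hmm'
  have hpos : ∀ y ∈ Ioo m' x, 0 < deriv g y := by
    intro y hy
    have hyS : y ∈ Ioo a x := ⟨lt_of_le_of_lt (le_max_left a (x-δ)) (hmm'.trans hy.1), hy.2⟩
    have hslope : slope (deriv g) x y < 0 := haS hyS
    rw [slope_def_field, hd1, sub_zero] at hslope
    by_contra hcon
    push_neg at hcon
    exact absurd (div_nonneg_of_nonpos hcon (by linarith [hy.2])) (not_le.2 hslope)
  have hsub : Icc m' x ⊆ Ioo (x - δ) (x + δ) := fun y hy =>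
    ⟨lt_of_lt_of_le hm'δ hy.1, lt_of_le_of_lt hy.2 (by linarith)⟩
  have hsm : StrictMonoOn g (Icc m' x) := by
    apply strictMonoOn_of_deriv_pos (convex_Icc m' x)
    · exact fun y hy => (hdiff y (hsub hy)).continuousAt.continuousWithinAt
    · intro y hy
      rw [interior_Icc] at hy
      exact hpos y hy
  have h1 : g m' < g x := hsm ⟨le_refl m', hm'x.le⟩ ⟨hm'x.le, le_refl x⟩ hm'x
  have h2 : g x ≤ g m' := hmin m' ⟨hm'δ, hm'x⟩
  linarith

lemma integral_rev_le (F : StieltjesFunction ℝ)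
    (hF01 : ∀ x : ℝ, F x ∈ Icc (0 : ℝ) 1) (hF0 : ∀ x : ℝ, x ≤ 0 → F x = 0)
    {v : ℝ → ℝ} (hc : ContinuousOn v (Ici 0)) (hm : MonotoneOn v (Ici 0)) (hv0 : 0 ≤ v 0)
    {x : ℝ} (hx : 0 ≤ x) :
    ∫ α in Icc (0 : ℝ) x, v (x - α) ∂F.measure ≤ v x := by
  have hll : Function.leftLim (⇑F) 0 = 0 := by
    apply leftLim_eq_of_tendsto
    have hev : (⇑F) =ᶠ[𝓝[<] (0:ℝ)] fun _ => (0:ℝ) :=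
      eventually_nhdsWithin_of_forall (fun y hy => hF0 y (le_of_lt hy))
    exact (tendsto_congr' hev).2 tendsto_const_nhds
  have hμ : F.measure (Icc (0:ℝ) x) ≤ 1 := by
    rw [F.measure_Icc, hll, sub_zero]
    exact ENNReal.ofReal_le_one.2 (hF01 x).2
  have hvx : 0 ≤ v x := hv0.trans (hm (self_mem_Ici) hx hx)
  have hcomp : ContinuousOn (fun α => v (x - α)) (Icc 0 x) :=
    hc.comp (continuous_const.sub continuous_id).continuousOn
      (fun α hα => mem_Ici.2 (sub_nonneg.2 hα.2))
  have hint : IntegrableOn (fun α => v (x - α)) (Icc 0 x) F.measure :=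
    hcomp.integrableOn_compact isCompact_Icc
  have hintc : IntegrableOn (fun _ : ℝ => v x) (Icc 0 x) F.measure :=
    integrableOn_const (lt_of_le_of_lt hμ ENNReal.one_lt_top).ne
  have h1 : ∫ α in Icc (0:ℝ) x, v (x - α) ∂F.measure ≤ ∫ _ in Icc (0:ℝ) x, v x ∂F.measure :=
    setIntegral_mono_on hint hintc measurableSet_Icc
      (fun α hα => hm (mem_Ici.2 (sub_nonneg.2 hα.2)) (mem_Ici.2 hx) (by linarith [hα.1]))
  rw [setIntegral_const, smul_eq_mul] at h1
  have h2 : (F.measure (Icc (0:ℝ) x)).toReal ≤ 1 := by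
    have := ENNReal.toReal_mono ENNReal.one_ne_top hμ
    simpa using this
  calc ∫ α in Icc (0:ℝ) x, v (x - α) ∂F.measure
      ≤ (F.measure (Icc (0:ℝ) x)).toReal * v x := h1
    _ ≤ 1 * v x := mul_le_mul_of_nonneg_right h2 hvx
    _ = v x := one_mul _
end helpers

/-- **Barrier value functions are supersolutions** (from the proof of Proposition 7.1):
assume `F` has a bounded density, let `W` be the unique increasing `C²` solution of
`L*(W)=0` on `(0,∞)` with `W 0 = 1`, and let `x₀ ≥ p/(c-r)` be such that
`W'(x₀) ≤ W'(x)` for all `x ∈ (0,x₀]`. Then the value function of the barrier strategy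
with level `x₀`, `U(x) = W(x)/W'(x₀)` for `x ≤ x₀` and
`U(x) = W(x₀)/W'(x₀) + (x - x₀)` for `x > x₀`, is a viscosity supersolution of the HJB
equation `max {1 - u'(x), L*(u)(x)} = 0` at every `x ∈ (0,∞)`. -/
theorem barrier_value_is_supersolution
    (p β c r σ : ℝ) (hp : 0 < p) (hβ : 0 < β) (hr : 0 < r) (hrc : r < c) (hσ : 0 < σ)
    (F : StieltjesFunction ℝ)
    (hF01 : ∀ x : ℝ, F x ∈ Icc (0 : ℝ) 1)
    (hF0 : ∀ x : ℝ, x ≤ 0 → F x = 0)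
    (hF1 : Tendsto (⇑F) atTop (nhds 1))
    (hFmean : IntegrableOn id (Ici (0 : ℝ)) F.measure)
    (hFd : ∃ f : ℝ → ℝ, Measurable f ∧ (∃ C : ℝ, ∀ t, |f t| ≤ C) ∧ (∀ t, 0 ≤ f t) ∧
      (∀ t : ℝ, t ≤ 0 → f t = 0) ∧ ∀ x : ℝ, F x = ∫ t in (0 : ℝ)..x, f t)
    (W : ℝ → ℝ) (hW : IsSolW p β c r σ F W)
    (x₀ : ℝ) (hx₀ : p / (c - r) ≤ x₀)
    (hmin : ∀ x ∈ Ioc (0 : ℝ) x₀, deriv W x₀ ≤ deriv W x)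
    (U : ℝ → ℝ)
    (hU : ∀ x : ℝ, U x =
      if x ≤ x₀ then W x / deriv W x₀ else W x₀ / deriv W x₀ + (x - x₀)) :
    ∀ x ∈ Ioi (0 : ℝ), SupersolHJBAt p β c r σ F U x := by
  obtain ⟨hWmono, hWcont, hWC2, hW0, hWeq⟩ := hW
  haveI : Nonempty (Icc (0:ℝ) 1) := ⟨⟨0, le_refl 0, zero_le_one⟩⟩
  set k := deriv W x₀ with hk_def
  have hcr : 0 < c - r := sub_pos.2 hrc
  have hc : 0 < c := lt_trans hr hrc
  have hx₀pos : 0 < x₀ := lt_of_lt_of_le (div_pos hp hcr) hx₀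
  -- basic differentiability of W
  have hWdiff : ∀ y ∈ Ioi (0:ℝ), DifferentiableAt ℝ W y := fun y hy =>
    (hWC2.differentiableOn (by norm_num)).differentiableAt (isOpen_Ioi.mem_nhds hy)
  have hW'C1 : ContDiffOn ℝ 1 (deriv W) (Ioi 0) :=
    hWC2.deriv_of_isOpen isOpen_Ioi (by norm_num)
  have hW'diff : ∀ y ∈ Ioi (0:ℝ), DifferentiableAt ℝ (deriv W) y := fun y hy =>
    (hW'C1.differentiableOn one_ne_zero).differentiableAt (isOpen_Ioi.mem_nhds hy)
  -- each Lg of W is ≤ 0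
  have hLgW : ∀ x ∈ Ioi (0:ℝ), ∀ γ ∈ Icc (0:ℝ) 1, Lg p β c r σ F γ W W x ≤ 0 := by
    intro x hx γ hγ
    have hcont : Continuous fun γ : Icc (0:ℝ) 1 => Lg p β c r σ F (γ:ℝ) W W x := by
      unfold Lg; fun_prop
    have hb : BddAbove (range fun γ : Icc (0:ℝ) 1 => Lg p β c r σ F (γ:ℝ) W W x) :=
      (isCompact_range hcont).bddAbove
    have h1 := le_ciSup hb (⟨γ, hγ⟩ : Icc (0:ℝ) 1)
    have h0 := hWeq x hx
    unfold Lstar at h0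
    exact le_of_le_of_eq h1 h0
  have hWx₀1 : (1:ℝ) < W x₀ := by
    have := hWmono (self_mem_Ici) (mem_Ici.2 hx₀pos.le) hx₀pos
    rwa [hW0] at this
  -- deriv W x₀ > 0
  have hknn : 0 ≤ k := by
    refine deriv_nonneg_of_min_right (hWdiff x₀ hx₀pos).hasDerivAt (lt_add_one x₀) ?_
    intro y hy
    exact (hWmono (mem_Ici.2 hx₀pos.le) (mem_Ici.2 (hx₀pos.trans hy.1).le) hy.1).le
  have hW''le : deriv (deriv W) x₀ ≤ 0 := by
    refine deriv_nonpos_of_min_left (hW'diff x₀ hx₀pos).hasDerivAt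
      (show x₀/2 < x₀ by linarith) ?_
    intro y hy
    exact hmin y ⟨by linarith [hy.1], hy.2.le⟩
  have hk : 0 < k := by
    rcases hknn.lt_or_eq with h | h
    · exact h
    · exfalso
      have hIB : ∫ α in Icc (0:ℝ) x₀, W (x₀ - α) ∂F.measure ≤ W x₀ :=
        integral_rev_le F hF01 hF0 hWcont hWmono.monotoneOn
          (by rw [hW0]; norm_num) hx₀pos.le
      have hLs := hWeq x₀ hx₀pos
      have hle : Lstar p β c r σ F W W x₀ ≤ -(c * W x₀) := by
        unfold Lstar
        apply ciSup_le
        rintro ⟨γ, hγ0, hγ1⟩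
        unfold Lg
        have hkz : deriv W x₀ = 0 := h.symm
        rw [hkz, mul_zero]
        have hsq : σ^2*γ^2*x₀^2 = (σ*γ*x₀)^2 := by ring
        have ht1 : σ^2*γ^2*x₀^2 * deriv (deriv W) x₀ / 2 ≤ 0 := by
          have h0 : (0:ℝ) ≤ σ^2*γ^2*x₀^2 := by positivity
          have := mul_nonpos_of_nonneg_of_nonpos h0 hW''le
          linarith
        have ht4 : β * ∫ α in Icc (0:ℝ) x₀, W (x₀ - α) ∂F.measure ≤ β * W x₀ :=
          mul_le_mul_of_nonneg_left hIB hβ.le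
        nlinarith [hWx₀1]
      rw [hLs] at hle
      nlinarith [hWx₀1]
  -- U description
  have hUeq_le : ∀ z, z ≤ x₀ → U z = W z / k := fun z hz => by rw [hU z, if_pos hz]
  have hUeq_gt : ∀ z, x₀ < z → U z = W x₀ / k + (z - x₀) := fun z hz => by
    rw [hU z, if_neg (not_le.2 hz)]
  -- MVT-type bound : k * x₀ + 1 ≤ W x₀
  have hmvt : k * x₀ + 1 ≤ W x₀ := by
    have hmono : MonotoneOn (fun y => W y - k * y) (Icc 0 x₀) := by
      apply monotoneOn_of_hasDerivWithinAt_nonneg (convex_Icc 0 x₀)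
        (f' := fun y => deriv W y - k)
      · exact (hWcont.mono Icc_subset_Ici_self).sub (by fun_prop)
      · intro y hy
        rw [interior_Icc] at hy
        exact (((hWdiff y hy.1).hasDerivAt.sub
          (((hasDerivAt_id y).const_mul k).congr_deriv (mul_one k))).hasDerivWithinAt).mono
          (by rw [interior_Icc])
      · intro y hy
        rw [interior_Icc] at hy
        have := hmin y ⟨hy.1, hy.2.le⟩
        linarith
    have := hmono (left_mem_Icc.2 hx₀pos.le) (right_mem_Icc.2 hx₀pos.le) hx₀pos.le
    simp only [mul_zero, sub_zero, hW0] at this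
    linarith
  have hUx₀ : x₀ < W x₀ / k := by
    rw [lt_div_iff₀ hk]
    nlinarith
  -- U is continuous and monotone on [0,∞)
  have hUcont : ContinuousOn U (Ici 0) := by
    have h1 : ContinuousOn U (Icc 0 x₀) := by
      apply ContinuousOn.congr ((hWcont.mono Icc_subset_Ici_self).div_const k)
      exact fun y hy => hUeq_le y hy.2
    have h2 : ContinuousOn U (Ici x₀) := by
      apply ContinuousOn.congr
        (f := fun y => W x₀ / k + (y - x₀))
        (continuous_const.add (continuous_id.sub continuous_const)).continuousOn
      intro y hy
      rcases eq_or_lt_of_le (mem_Ici.1 hy) with h | h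
      · rw [← h, hUeq_le x₀ le_rfl]; ring
      · rw [hUeq_gt y h]
    intro y hy
    have hw1 : ContinuousWithinAt U (Icc 0 x₀) y := by
      by_cases hmem : y ∈ Icc 0 x₀
      · exact h1 y hmem
      · exact continuousWithinAt_of_notMem_closure
          (by rwa [isClosed_Icc.closure_eq])
    have hw2 : ContinuousWithinAt U (Ici x₀) y := by
      by_cases hmem : y ∈ Ici x₀
      · exact h2 y hmem
      · exact continuousWithinAt_of_notMem_closure
          (by rwa [isClosed_Ici.closure_eq])
    have := hw1.union hw2
    rwa [Icc_union_Ici_eq_Ici hx₀pos.le] at this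
  have hUmono : MonotoneOn U (Ici 0) := by
    intro a ha b hb hab
    rcases le_or_gt b x₀ with h | h
    · rw [hUeq_le a (hab.trans h), hUeq_le b h]
      have := hWmono.monotoneOn ha hb hab
      gcongr
    · rcases le_or_gt a x₀ with h' | h'
      · rw [hUeq_le a h', hUeq_gt b h]
        have : W a ≤ W x₀ := hWmono.monotoneOn ha (mem_Ici.2 hx₀pos.le) h'
        have : W a / k ≤ W x₀ / k := by gcongr
        linarith
      · rw [hUeq_gt a h', hUeq_gt b h]
        linarith
  -- main proof
  intro x hx φ hφ htest
  have hφd : Differentiable ℝ φ := hφ.differentiable (by norm_num)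
  have hφ2 : ContDiff ℝ (1+1) φ := by
    rw [show ((1:WithTop ℕ∞)+1) = 2 by norm_num]
    exact hφ
  have hφ1 : ContDiff ℝ 1 (deriv φ) := (contDiff_succ_iff_deriv.mp hφ2).2.2
  have hφ'd : Differentiable ℝ (deriv φ) := hφ1.differentiable one_ne_zero
  have hloc : IsLocalMin (fun y => U y - φ y) x :=
    (isOpen_Ioi.eventually_mem hx).mono (fun y hy => htest y hy)
  rcases le_or_gt x x₀ with hxle | hlt
  · -- case x ≤ x₀
    have hder : HasDerivAt U (deriv W x / k) x := by
      rcases eq_or_lt_of_le hxle with heq | hlt'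
      · subst heq
        have hl : HasDerivWithinAt U 1 (Iic x) x := by
          have h1 := ((hWdiff x hx).hasDerivAt.div_const k).hasDerivWithinAt (s := Iic x)
          rw [← hk_def, div_self hk.ne'] at h1
          exact h1.congr (fun y hy => hUeq_le y hy) (hUeq_le x le_rfl)
        have hrr : HasDerivWithinAt U 1 (Ici x) x := by
          have haff : HasDerivAt (fun y => W x / k + (y - x)) 1 x := by
            simpa using ((hasDerivAt_id x).sub_const x).const_add (W x / k)
          refine haff.hasDerivWithinAt.congr ?_ ?_
          · intro y hy
            rcases eq_or_lt_of_le (mem_Ici.1 hy) with h | h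
            · rw [← h, hUeq_le x le_rfl]; ring
            · rw [hUeq_gt y h]
          · rw [hUeq_le x le_rfl]; ring
        have hu := hl.union hrr
        rw [Iic_union_Ici, hasDerivWithinAt_univ] at hu
        rw [← hk_def, div_self hk.ne']
        exact hu
      · have hev : U =ᶠ[𝓝 x] fun y => W y / k := by
          filter_upwards [Iio_mem_nhds hlt'] with y hy
          exact hUeq_le y hy.le
        exact ((hWdiff x hx).hasDerivAt.div_const k).congr_of_eventuallyEq hev
    have hφ'x : deriv φ x = deriv W x / k := by
      have h0 := hloc.deriv_eq_zero
      rw [deriv_fun_sub hder.differentiableAt (hφd x), hder.deriv] at h0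
      linarith
    have hφ'ge : 1 ≤ deriv φ x := by
      rw [hφ'x]
      exact (one_le_div hk).2 (hmin x ⟨hx, hxle⟩)
    -- second-order condition
    have hgd' : ∀ y ∈ Ioi (0:ℝ), deriv (fun z => W z / k - φ z) y
        = deriv W y / k - deriv φ y := by
      intro y hy
      rw [deriv_fun_sub ((hWdiff y hy).div_const k) (hφd y), deriv_div_const]
    have hd2 : HasDerivAt (deriv (fun z => W z / k - φ z))
        (deriv (deriv W) x / k - deriv (deriv φ) x) x := by
      have hbase : HasDerivAt (fun y => deriv W y / k - deriv φ y)
          (deriv (deriv W) x / k - deriv (deriv φ) x) x :=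
        ((hW'diff x hx).hasDerivAt.div_const k).sub (hφ'd x).hasDerivAt
      apply hbase.congr_of_eventuallyEq
      filter_upwards [isOpen_Ioi.mem_nhds hx] with y hy
      exact hgd' y hy
    have hd1 : deriv (fun z => W z / k - φ z) x = 0 := by
      rw [hgd' x hx, hφ'x]; ring
    have hsecond : 0 ≤ deriv (deriv W) x / k - deriv (deriv φ) x := by
      refine second_deriv_nonneg_of_min_left (g := fun z => W z / k - φ z) (δ := x)
        hx ?_ hd2 hd1 ?_
      · intro y hy
        have hy0 : 0 < y := by have := hy.1; linarith
        exact ((hWdiff y hy0).div_const k).sub (hφd y)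
      · intro y hy
        have hy0 : 0 < y := by have := hy.1; linarith
        have hyx : y ≤ x₀ := le_trans hy.2.le hxle
        have ht := htest y hy0
        rw [hUeq_le x hxle, hUeq_le y hyx] at ht
        exact ht
    have hφ''x : deriv (deriv φ) x ≤ deriv (deriv W) x / k := by linarith
    -- integral identity
    have hIeq : ∫ α in Icc (0:ℝ) x, U (x - α) ∂F.measure
        = (∫ α in Icc (0:ℝ) x, W (x - α) ∂F.measure) / k := by
      have h1 : ∫ α in Icc (0:ℝ) x, U (x - α) ∂F.measure
          = ∫ α in Icc (0:ℝ) x, W (x - α) / k ∂F.measure := by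
        refine setIntegral_congr_fun measurableSet_Icc ?_
        intro α hα
        exact hUeq_le _ (by simp only [mem_Icc] at hα; linarith)
      rw [h1, integral_div]
    rw [max_le_iff]
    refine ⟨by linarith only [hφ'ge], ?_⟩
    unfold Lstar
    apply ciSup_le
    rintro ⟨γ, hγ0, hγ1⟩
    have hWle := hLgW x hx γ ⟨hγ0, hγ1⟩
    unfold Lg at hWle ⊢
    rw [hUeq_le x hxle, hIeq, hφ'x]
    have hc0 : (0:ℝ) ≤ σ^2*γ^2*x^2 := by positivity
    have h2 : σ^2*γ^2*x^2 * deriv (deriv φ) x ≤ σ^2*γ^2*x^2 * (deriv (deriv W) x / k) :=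
      mul_le_mul_of_nonneg_left hφ''x hc0
    have hkey : σ^2*γ^2*x^2 * (deriv (deriv W) x / k)/2 + (p + r*γ*x) * (deriv W x / k)
        - (c+β) * (W x / k) + β * ((∫ α in Icc (0:ℝ) x, W (x - α) ∂F.measure)/k)
        = (σ^2*γ^2*x^2 * deriv (deriv W) x/2 + (p + r*γ*x) * deriv W x
        - (c+β) * W x + β * ∫ α in Icc (0:ℝ) x, W (x - α) ∂F.measure)/k := by
      field_simp
    have hneg : (σ^2*γ^2*x^2 * deriv (deriv W) x/2 + (p + r*γ*x) * deriv W x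
        - (c+β) * W x + β * ∫ α in Icc (0:ℝ) x, W (x - α) ∂F.measure)/k ≤ 0 :=
      div_nonpos_iff.2 (Or.inr ⟨hWle, hk.le⟩)
    linarith only [h2, hkey, hneg]
  · -- case x₀ < x
    have haffd : ∀ y : ℝ, HasDerivAt (fun z => W x₀ / k + (z - x₀)) 1 y := by
      intro y
      simpa using ((hasDerivAt_id y).sub_const x₀).const_add (W x₀ / k)
    have hev : U =ᶠ[𝓝 x] fun y => W x₀ / k + (y - x₀) := by
      filter_upwards [Ioi_mem_nhds hlt] with y hy
      exact hUeq_gt y hy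
    have hder : HasDerivAt U 1 x := (haffd x).congr_of_eventuallyEq hev
    have hφ'x : deriv φ x = 1 := by
      have h0 := hloc.deriv_eq_zero
      rw [deriv_fun_sub hder.differentiableAt (hφd x), hder.deriv] at h0
      linarith
    have hgd' : ∀ y : ℝ, deriv (fun z => (W x₀ / k + (z - x₀)) - φ z) y
        = 1 - deriv φ y := by
      intro y
      rw [deriv_fun_sub (haffd y).differentiableAt (hφd y), (haffd y).deriv]
    have hd2 : HasDerivAt (deriv (fun z => (W x₀ / k + (z - x₀)) - φ z))
        (0 - deriv (deriv φ) x) x := by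
      have hbase : HasDerivAt (fun y => 1 - deriv φ y) (0 - deriv (deriv φ) x) x :=
        (hasDerivAt_const x (1:ℝ)).sub (hφ'd x).hasDerivAt
      apply hbase.congr_of_eventuallyEq
      exact Filter.Eventually.of_forall hgd'
    have hd1 : deriv (fun z => (W x₀ / k + (z - x₀)) - φ z) x = 0 := by
      rw [hgd' x, hφ'x]; ring
    have hsecond : 0 ≤ 0 - deriv (deriv φ) x := by
      refine second_deriv_nonneg_of_min_left (g := fun z => (W x₀ / k + (z - x₀)) - φ z)
        (δ := x - x₀) (by linarith) ?_ hd2 hd1 ?_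
      · intro y hy
        exact (haffd y).differentiableAt.sub (hφd y)
      · intro y hy
        have hy0 : x₀ < y := by have := hy.1; linarith
        have ht := htest y (lt_trans hx₀pos hy0)
        rw [hUeq_gt x hlt, hUeq_gt y hy0] at ht
        exact ht
    have hIB : ∫ α in Icc (0:ℝ) x, U (x - α) ∂F.measure ≤ U x := by
      refine integral_rev_le F hF01 hF0 hUcont hUmono ?_ (le_of_lt hx)
      rw [hUeq_le 0 hx₀pos.le, hW0]
      positivity
    have hple : p ≤ (c - r) * x₀ := by have := (div_le_iff₀ hcr).1 hx₀; linarith only [this]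
    have hUx : U x = W x₀ / k + (x - x₀) := hUeq_gt x hlt
    rw [max_le_iff]
    refine ⟨by rw [hφ'x]; norm_num, ?_⟩
    unfold Lstar
    apply ciSup_le
    rintro ⟨γ, hγ0, hγ1⟩
    unfold Lg
    rw [hφ'x, mul_one]
    have hc0 : (0:ℝ) ≤ σ^2*γ^2*x^2 := by positivity
    have ht1 : σ^2*γ^2*x^2 * deriv (deriv φ) x / 2 ≤ 0 := by
      have hdd : deriv (deriv φ) x ≤ 0 := by linarith only [hsecond]
      have := mul_nonpos_of_nonneg_of_nonpos hc0 hdd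
      linarith only [this]
    have ht4 : β * ∫ α in Icc (0:ℝ) x, U (x - α) ∂F.measure ≤ β * U x :=
      mul_le_mul_of_nonneg_left hIB hβ.le
    have hrg : r * γ * x ≤ r * x := by
      rw [mul_assoc]
      exact mul_le_mul_of_nonneg_left
        (mul_le_of_le_one_left (le_of_lt (lt_trans hx₀pos hlt)) hγ1) hr.le
    have hcu : p + r * x ≤ c * U x := by
      rw [hUx]
      have h5 : r * (x - x₀) ≤ c * (x - x₀) :=
        mul_le_mul_of_nonneg_right hrc.le (by linarith only [hlt])
      have h6 : c * x₀ ≤ c * (W x₀ / k) := mul_le_mul_of_nonneg_left hUx₀.le hc.le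
      linarith only [hple, h5, h6]
    linarith only [ht1, ht4, hrg, hcu]
end

section
/- Linear tail estimate: let y ≥ p/(c−r) and let u:[0,∞)→ℝ be continuous and nondecreasing with u(y) ≥ y and u(x) = u(y) + (x−y) for all x ≥ y (extend u by u(x)=0 for x<0). Then for every x > y and every γ ∈ [0,1], (p+rγx) − (c+β)u(x) + β∫₀ˣ u(x−α)dF(α) ≤ p + (r−c)y ≤ 0; in particular, since u is affine with slope 1 on (y,∞), L_γ(u)(x) ≤ 0 for all x>y and γ∈[0,1]. -/
open MeasureTheory Set Filter

/-- **Linear tail estimate** (from the proof of Lemma A.4(d)): if `y ≥ p/(c-r)` and `u`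
is continuous, nondecreasing on `[0,∞)` with `u y ≥ y` and affine with slope one on
`[y,∞)`, then for every `x > y` and `γ ∈ [0,1]`,
`(p + rγx) - (c+β)u(x) + β∫₀ˣ u(x-α)dF(α) ≤ p + (r-c)y ≤ 0`; in particular
`L_γ(u)(x) ≤ 0` for all `x > y`. -/
theorem linear_tail_estimate
    (p β c r σ : ℝ) (hp : 0 < p) (hβ : 0 < β) (hr : 0 < r) (hrc : r < c) (hσ : 0 < σ)
    (F : StieltjesFunction ℝ)
    (hF01 : ∀ x : ℝ, F x ∈ Icc (0 : ℝ) 1)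
    (hF0 : ∀ x : ℝ, x ≤ 0 → F x = 0)
    (hF1 : Tendsto (⇑F) atTop (nhds 1))
    (hFmean : IntegrableOn id (Ici (0 : ℝ)) F.measure)
    (y : ℝ) (hy : p / (c - r) ≤ y)
    (u : ℝ → ℝ)
    (hcont : ContinuousOn u (Ici 0)) (hmono : MonotoneOn u (Ici 0))
    (huy : y ≤ u y) (haff : ∀ x ≥ y, u x = u y + (x - y)) :
    ∀ x : ℝ, y < x → ∀ γ ∈ Icc (0 : ℝ) 1,
      ((p + r * γ * x) - (c + β) * u x
          + β * ∫ α in Icc (0 : ℝ) x, u (x - α) ∂F.measure ≤ p + (r - c) * y) ∧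
      p + (r - c) * y ≤ 0 ∧
      Lg p β c r σ F γ u u x ≤ 0 := by
  intro x hx γ hγ
  have hcr : 0 < c - r := sub_pos.mpr hrc
  have hy0 : 0 < y := lt_of_lt_of_le (div_pos hp hcr) hy
  have hx0 : 0 < x := hy0.trans hx
  have hux : u x = u y + (x - y) := haff x hx.le
  have hux_ge : x ≤ u x := by nlinarith
  have hux0 : (0:ℝ) ≤ u x := by linarith
  -- the Stieltjes measure is a (sub)probability
  have hbot : Tendsto (⇑F) atBot (nhds 0) := by
    apply Tendsto.congr' _ tendsto_const_nhds
    filter_upwards [eventually_le_atBot (0:ℝ)] with z hz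
    exact (hF0 z hz).symm
  have huniv : F.measure univ = 1 := by
    rw [F.measure_univ hbot hF1]; simp
  have hmeas_le : F.measure (Icc 0 x) ≤ 1 := huniv ▸ measure_mono (subset_univ _)
  have hμfin : F.measure (Icc 0 x) < ⊤ := lt_of_le_of_lt hmeas_le (by norm_num)
  have hint : IntegrableOn (fun α => u (x - α)) (Icc 0 x) F.measure := by
    apply ContinuousOn.integrableOn_compact isCompact_Icc
    apply hcont.comp (continuousOn_const.sub continuousOn_id)
    intro α hα
    exact sub_nonneg.mpr hα.2
  have hle_int : ∫ α in Icc (0:ℝ) x, u (x - α) ∂F.measure ≤ u x := by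
    calc ∫ α in Icc (0:ℝ) x, u (x - α) ∂F.measure
        ≤ ∫ _α in Icc (0:ℝ) x, u x ∂F.measure := by
          refine setIntegral_mono_on hint (integrableOn_const hμfin.ne)
            measurableSet_Icc fun α hα => ?_
          exact hmono (mem_Ici.mpr (sub_nonneg.mpr hα.2)) (mem_Ici.mpr hx0.le) (by linarith [hα.1])
      _ = (F.measure (Icc 0 x)).toReal * u x := by
          rw [setIntegral_const, smul_eq_mul, measureReal_def]
      _ ≤ 1 * u x := by
          refine mul_le_mul_of_nonneg_right ?_ hux0
          simpa using ENNReal.toReal_mono ENNReal.one_ne_top hmeas_le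
      _ = u x := one_mul _
  have h1 : (p + r * γ * x) - (c + β) * u x
      + β * ∫ α in Icc (0:ℝ) x, u (x - α) ∂F.measure ≤ p + (r - c) * y := by
    have hβint : β * (∫ α in Icc (0:ℝ) x, u (x - α) ∂F.measure) ≤ β * u x :=
      mul_le_mul_of_nonneg_left hle_int hβ.le
    nlinarith [mul_nonneg (mul_nonneg hr.le (sub_nonneg.mpr hγ.2)) hx0.le,
      mul_nonneg (le_of_lt (hr.trans hrc)) (sub_nonneg.mpr hux_ge),
      mul_nonneg hcr.le (sub_nonneg.mpr hx.le)]
  have h2 : p + (r - c) * y ≤ 0 := by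
    have := (div_le_iff₀ hcr).mp hy
    nlinarith
  refine ⟨h1, h2, ?_⟩
  have hd : ∀ z ∈ Ioi y, deriv u z = 1 := by
    intro z hz
    have heq : u =ᶠ[nhds z] fun w => u y + (w - y) := by
      filter_upwards [Ioi_mem_nhds hz] with w hw
      exact haff w (le_of_lt hw)
    rw [heq.deriv_eq]
    simp
  have hd1 : deriv u x = 1 := hd x hx
  have hd2 : deriv (deriv u) x = 0 := by
    have heq : deriv u =ᶠ[nhds x] fun _ => (1:ℝ) := by
      filter_upwards [Ioi_mem_nhds hx] with w hw
      exact hd w hw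
    rw [heq.deriv_eq]
    simp
  unfold Lg
  rw [hd1, hd2]
  simpa using h1.trans h2
end
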